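/- Assume S₁ = ∫_{−∞}^0 q(t)/r(t) dt = ∞ and S₂ = ∫_0^∞ q(t)/r(t) dt = ∞, and suppose there exists δ > 0 such that d(t) ≥ δ·d(x) whenever |t−x| ≤ d(x), for all x ∈ ℝ. If q(x) → 0 as x → −∞ or q(x) → 0 as x → +∞, then for every p ∈ [1,∞] the boundary value problem −r(x)y′(x)+q(x)y(x)=f(x), lim_{|x|→∞} y(x)=0, is not correctly solvable in L_p(ℝ). -/

import Mathlib

open MeasureTheory Filter Set Real
open scoped ENNReal NNReal

noncomputable section

/-- `y` is a solution of the boundary value problem `-r·y' + q·y = f` on `ℝ` with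
`y → 0` at `±∞`: `y` is continuous, locally absolutely continuous (encoded through the
integral identity, i.e. `y` is the integral of its a.e. derivative `(q·y - f)/r`),
and tends to `0` at both infinities. -/
def IsSolution (r q f y : ℝ → ℝ) : Prop :=
  Continuous y ∧
  (∀ a b : ℝ, y b - y a = ∫ t in a..b, (q t * y t - f t) / r t) ∧
  Tendsto y atBot (nhds 0) ∧ Tendsto y atTop (nhds 0)

/-- Correct solvability of the problem `-r·y' + q·y = f`, `y(±∞) = 0`, in `L_p(ℝ)`:
for every `f ∈ L_p(ℝ)` there is a unique solution `y ∈ L_p(ℝ)`, and the solution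
satisfies `‖y‖_p ≤ c‖f‖_p` with a constant `c ∈ (0,∞)` independent of `f`. -/
def CorrectlySolvableLp (r q : ℝ → ℝ) (p : ℝ≥0∞) : Prop :=
  ∃ c : ℝ≥0∞, 0 < c ∧ c < ⊤ ∧
    ∀ f : ℝ → ℝ, MemLp f p volume →
      (∃! y : ℝ → ℝ, IsSolution r q f y ∧ MemLp y p volume) ∧
      ∀ y : ℝ → ℝ, IsSolution r q f y → MemLp y p volume →
        eLpNorm y p volume ≤ c * eLpNorm f p volume

/-- Correct solvability of the problem `-r·y' + q·y = f`, `y(±∞) = 0`, in `C(ℝ)`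
(bounded continuous functions with the sup-norm): for every bounded continuous `f`
there is a unique solution `y` (such a solution is automatically bounded and
continuous), and `sup|y| ≤ c·sup|f|` with a constant `c ∈ (0,∞)` independent of `f`. -/
def CorrectlySolvableC (r q : ℝ → ℝ) : Prop :=
  ∃ c : ℝ, 0 < c ∧
    ∀ f : ℝ → ℝ, Continuous f → (∃ M : ℝ, ∀ x, |f x| ≤ M) →
      (∃! y : ℝ → ℝ, IsSolution r q f y) ∧
      ∀ y : ℝ → ℝ, IsSolution r q f y → ∀ x, |y x| ≤ c * ⨆ t, |f t|

/-- `S₁ = ∫_{-∞}^0 q(t)/r(t) dt`, as a (possibly infinite) lower Lebesgue integral. -/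
def S1E (r q : ℝ → ℝ) : ℝ≥0∞ :=
  ∫⁻ t in Set.Iio (0 : ℝ), ENNReal.ofReal (q t / r t)

/-- `S₂ = ∫_0^∞ q(t)/r(t) dt`, as a (possibly infinite) lower Lebesgue integral. -/
def S2E (r q : ℝ → ℝ) : ℝ≥0∞ :=
  ∫⁻ t in Set.Ioi (0 : ℝ), ENNReal.ofReal (q t / r t)

/-- The auxiliary function `d(x) = inf { d > 0 : ∫_{x-d}^{x+d} q(t)/r(t) dt = 2 }`. -/
def dfun (r q : ℝ → ℝ) (x : ℝ) : ℝ :=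
  sInf {d : ℝ | 0 < d ∧ (∫ t in (x - d)..(x + d), q t / r t) = 2}


namespace Stmt18Aux

theorem LocIntMulCont {f g : ℝ → ℝ} (hf : LocallyIntegrable f volume) (hg : Continuous g) :
    LocallyIntegrable (fun x => f x * g x) volume := by
  rw [locallyIntegrable_iff] at hf ⊢
  intro k hk
  exact (hf k hk).mul_continuousOn hg.continuousOn hk

theorem locInt_ii {f : ℝ → ℝ} (hf : LocallyIntegrable f volume) (a b : ℝ) :
    IntervalIntegrable f volume a b :=
  (hf.integrableOn_isCompact isCompact_uIcc).intervalIntegrable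

variable {r q : ℝ → ℝ}

/-- the primitive `Q x = ∫_0^x q/r` -/
def Qf (r q : ℝ → ℝ) : ℝ → ℝ := fun x => ∫ t in (0:ℝ)..x, q t / r t

def wf (r q : ℝ → ℝ) : ℝ → ℝ := fun t => q t / r t

theorem w_loc (hr : Continuous r) (hrpos : ∀ x, 0 < r x) (hq : LocallyIntegrable q volume) :
    LocallyIntegrable (wf r q) volume := by
  have : Continuous fun t => (r t)⁻¹ := hr.inv₀ (fun t => (hrpos t).ne')
  have h := LocIntMulCont hq this
  unfold wf; simpa [div_eq_mul_inv] using h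

theorem w_nonneg (hrpos : ∀ x, 0 < r x) (hqnn : ∀ x, 0 ≤ q x) (t : ℝ) : 0 ≤ wf r q t :=
  div_nonneg (hqnn t) (hrpos t).le

theorem Qf_continuous (hw : LocallyIntegrable (wf r q) volume) : Continuous (Qf r q) :=
  intervalIntegral.continuous_primitive (fun a b => locInt_ii hw a b) 0

theorem Qf_sub (hw : LocallyIntegrable (wf r q) volume) (a b : ℝ) :
    Qf r q b - Qf r q a = ∫ t in a..b, q t / r t := by
  have h := intervalIntegral.integral_add_adjacent_intervals (locInt_ii hw 0 a) (locInt_ii hw a b)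
  have : Qf r q a + ∫ t in a..b, q t / r t = Qf r q b := h
  linarith

theorem Qf_mono (hrpos : ∀ x, 0 < r x) (hqnn : ∀ x, 0 ≤ q x)
    (hw : LocallyIntegrable (wf r q) volume) : Monotone (Qf r q) := by
  intro a b hab
  have h : 0 ≤ ∫ t in a..b, q t / r t :=
    intervalIntegral.integral_nonneg hab (fun u _ => w_nonneg hrpos hqnn u)
  have := Qf_sub hw a b
  linarith

theorem lint_Ioo_eq (hw : LocallyIntegrable (wf r q) volume)
    (hnn : ∀ t, 0 ≤ wf r q t) {a b : ℝ} (hab : a ≤ b) :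
    ENNReal.ofReal (∫ t in a..b, q t / r t) =
      ∫⁻ t in Ioo a b, ENNReal.ofReal (q t / r t) := by
  have hint : IntegrableOn (wf r q) (Ioo a b) volume :=
    (hw.integrableOn_isCompact (isCompact_Icc (a := a) (b := b))).mono_set Ioo_subset_Icc_self
  have h1 : ENNReal.ofReal (∫ t in Ioo a b, wf r q t) =
      ∫⁻ t in Ioo a b, ENNReal.ofReal (wf r q t) :=
    MeasureTheory.ofReal_integral_eq_lintegral_ofReal hint (Filter.Eventually.of_forall hnn)
  have h2 : (∫ t in Ioo a b, wf r q t) = ∫ t in a..b, q t / r t := by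
    rw [intervalIntegral.integral_of_le hab, ← MeasureTheory.integral_Ioc_eq_integral_Ioo]
    rfl
  rw [← h2, h1]; rfl

theorem exists_bigint_bot (hw : LocallyIntegrable (wf r q) volume)
    (hnn : ∀ t, 0 ≤ wf r q t) (hS1 : S1E r q = ⊤) :
    ∀ K : ℝ, ∃ n : ℕ, K < ∫ t in (-(n:ℝ))..0, q t / r t := by
  intro K
  by_contra hcon
  push_neg at hcon
  have key : ∀ n : ℕ, (∫⁻ t in Ioo (-(n:ℝ)) 0, ENNReal.ofReal (q t / r t)) ≤ ENNReal.ofReal K := by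
    intro n
    rw [← lint_Ioo_eq hw hnn (by simp : -(n:ℝ) ≤ 0)]
    exact ENNReal.ofReal_le_ofReal (hcon n)
  have hunion : Iio (0:ℝ) = ⋃ n : ℕ, Ioo (-(n:ℝ)) 0 := by
    ext x
    simp only [mem_Iio, mem_iUnion, mem_Ioo]
    constructor
    · intro hx
      obtain ⟨n, hn⟩ := exists_nat_gt (-x)
      exact ⟨n, by linarith, hx⟩
    · rintro ⟨n, _, hx⟩; exact hx
  have hmono : Monotone fun n : ℕ => (Ioo (-(n:ℝ)) 0).indicator
      (fun t => ENNReal.ofReal (q t / r t)) := by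
    intro m n hmn
    apply Set.indicator_le_indicator_of_subset
    · apply Ioo_subset_Ioo_left; simp [Nat.cast_le.mpr hmn]
    · intro t; exact zero_le
  have hmeas' : ∀ n : ℕ, AEMeasurable ((Ioo (-(n:ℝ)) 0).indicator
      (fun t => ENNReal.ofReal (q t / r t))) volume := fun n =>
    (hw.aestronglyMeasurable.aemeasurable.ennreal_ofReal).indicator measurableSet_Ioo
  have hlim : S1E r q = ⨆ n : ℕ, ∫⁻ t in Ioo (-(n:ℝ)) 0, ENNReal.ofReal (q t / r t) := by
    calc S1E r q
        = ∫⁻ t, (Iio (0:ℝ)).indicator (fun t => ENNReal.ofReal (q t / r t)) t := by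
          rw [S1E, lintegral_indicator measurableSet_Iio]
      _ = ∫⁻ t, ⨆ n : ℕ, (Ioo (-(n:ℝ)) 0).indicator (fun t => ENNReal.ofReal (q t / r t)) t := by
          congr 1; ext t
          rw [hunion, Set.indicator_iUnion_apply (M := ℝ≥0∞) rfl]
      _ = ⨆ n : ℕ, ∫⁻ t, (Ioo (-(n:ℝ)) 0).indicator (fun t => ENNReal.ofReal (q t / r t)) t :=
          lintegral_iSup' hmeas' (Filter.Eventually.of_forall (fun t m n hmn => hmono hmn t))
      _ = ⨆ n : ℕ, ∫⁻ t in Ioo (-(n:ℝ)) 0, ENNReal.ofReal (q t / r t) := by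
          simp_rw [lintegral_indicator measurableSet_Ioo]
  rw [hlim] at hS1
  have : (⨆ n : ℕ, ∫⁻ t in Ioo (-(n:ℝ)) 0, ENNReal.ofReal (q t / r t)) ≤ ENNReal.ofReal K :=
    iSup_le key
  rw [hS1] at this
  exact ENNReal.ofReal_ne_top (top_le_iff.mp this)

theorem exists_bigint_top (hw : LocallyIntegrable (wf r q) volume)
    (hnn : ∀ t, 0 ≤ wf r q t) (hS2 : S2E r q = ⊤) :
    ∀ K : ℝ, ∃ n : ℕ, K < ∫ t in (0:ℝ)..(n:ℝ), q t / r t := by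
  intro K
  by_contra hcon
  push_neg at hcon
  have key : ∀ n : ℕ, (∫⁻ t in Ioo (0:ℝ) n, ENNReal.ofReal (q t / r t)) ≤ ENNReal.ofReal K := by
    intro n
    rw [← lint_Ioo_eq hw hnn (by simp : (0:ℝ) ≤ (n:ℝ))]
    exact ENNReal.ofReal_le_ofReal (hcon n)
  have hunion : Ioi (0:ℝ) = ⋃ n : ℕ, Ioo (0:ℝ) n := by
    ext x
    simp only [mem_Ioi, mem_iUnion, mem_Ioo]
    constructor
    · intro hx
      obtain ⟨n, hn⟩ := exists_nat_gt x
      exact ⟨n, hx, hn⟩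
    · rintro ⟨n, hx, _⟩; exact hx
  have hmono : Monotone fun n : ℕ => (Ioo (0:ℝ) n).indicator
      (fun t => ENNReal.ofReal (q t / r t)) := by
    intro m n hmn
    apply Set.indicator_le_indicator_of_subset
    · apply Ioo_subset_Ioo_right; exact_mod_cast hmn
    · intro t; exact zero_le
  have hmeas' : ∀ n : ℕ, AEMeasurable ((Ioo (0:ℝ) n).indicator
      (fun t => ENNReal.ofReal (q t / r t))) volume := fun n =>
    (hw.aestronglyMeasurable.aemeasurable.ennreal_ofReal).indicator measurableSet_Ioo
  have hlim : S2E r q = ⨆ n : ℕ, ∫⁻ t in Ioo (0:ℝ) n, ENNReal.ofReal (q t / r t) := by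
    calc S2E r q
        = ∫⁻ t, (Ioi (0:ℝ)).indicator (fun t => ENNReal.ofReal (q t / r t)) t := by
          rw [S2E, lintegral_indicator measurableSet_Ioi]
      _ = ∫⁻ t, ⨆ n : ℕ, (Ioo (0:ℝ) n).indicator (fun t => ENNReal.ofReal (q t / r t)) t := by
          congr 1; ext t
          rw [hunion, Set.indicator_iUnion_apply (M := ℝ≥0∞) rfl]
      _ = ⨆ n : ℕ, ∫⁻ t, (Ioo (0:ℝ) n).indicator (fun t => ENNReal.ofReal (q t / r t)) t :=
          lintegral_iSup' hmeas' (Filter.Eventually.of_forall (fun t m n hmn => hmono hmn t))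
      _ = ⨆ n : ℕ, ∫⁻ t in Ioo (0:ℝ) n, ENNReal.ofReal (q t / r t) := by
          simp_rw [lintegral_indicator measurableSet_Ioo]
  rw [hlim] at hS2
  have : (⨆ n : ℕ, ∫⁻ t in Ioo (0:ℝ) n, ENNReal.ofReal (q t / r t)) ≤ ENNReal.ofReal K :=
    iSup_le key
  rw [hS2] at this
  exact ENNReal.ofReal_ne_top (top_le_iff.mp this)

theorem Qf_tendsto_bot (hrpos : ∀ x, 0 < r x) (hqnn : ∀ x, 0 ≤ q x)
    (hw : LocallyIntegrable (wf r q) volume) (hS1 : S1E r q = ⊤) :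
    Tendsto (Qf r q) atBot atBot := by
  have hmono := Qf_mono hrpos hqnn hw
  rw [tendsto_atBot]
  intro K
  obtain ⟨n, hn⟩ := exists_bigint_bot hw (w_nonneg hrpos hqnn) hS1 (Qf r q 0 - K)
  have : Qf r q (-(n:ℝ)) < K := by
    have := Qf_sub hw (-(n:ℝ)) 0
    linarith
  rw [eventually_atBot]
  exact ⟨-(n:ℝ), fun x hx => ((hmono hx).trans_lt this).le⟩

theorem Qf_tendsto_top (hrpos : ∀ x, 0 < r x) (hqnn : ∀ x, 0 ≤ q x)
    (hw : LocallyIntegrable (wf r q) volume) (hS2 : S2E r q = ⊤) :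
    Tendsto (Qf r q) atTop atTop := by
  have hmono := Qf_mono hrpos hqnn hw
  rw [tendsto_atTop]
  intro K
  obtain ⟨n, hn⟩ := exists_bigint_top hw (w_nonneg hrpos hqnn) hS2 (K - Qf r q 0)
  have : K < Qf r q (n:ℝ) := by
    have := Qf_sub hw 0 (n:ℝ)
    linarith
  rw [eventually_atTop]
  exact ⟨(n:ℝ), fun x hx => (this.trans_le (hmono hx)).le⟩


theorem dfun_spec (hrpos : ∀ x, 0 < r x) (hqnn : ∀ x, 0 ≤ q x)
    (hw : LocallyIntegrable (wf r q) volume) (hS2 : S2E r q = ⊤) (x : ℝ) :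
    0 < dfun r q x ∧ Qf r q (x + dfun r q x) - Qf r q (x - dfun r q x) = 2 := by
  classical
  set F : ℝ → ℝ := fun d => Qf r q (x + d) - Qf r q (x - d) with hF
  have hQc := Qf_continuous hw
  have hQm := Qf_mono hrpos hqnn hw
  have hFc : Continuous F := by
    exact (hQc.comp (continuous_const.add continuous_id)).sub
      (hQc.comp (continuous_const.sub continuous_id))
  have hFmono : Monotone F := by
    intro d₁ d₂ h
    have h1 : Qf r q (x + d₁) ≤ Qf r q (x + d₂) := hQm (by linarith)
    have h2 : Qf r q (x - d₂) ≤ Qf r q (x - d₁) := hQm (by linarith)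
    simp only [hF]; linarith
  have hSet : {d : ℝ | 0 < d ∧ (∫ t in (x - d)..(x + d), q t / r t) = 2} =
      {d : ℝ | 0 < d ∧ F d = 2} := by
    ext d
    simp only [mem_setOf_eq, hF, Qf_sub hw (x - d) (x + d)]
  -- there is d₀ with F d₀ ≥ 2
  obtain ⟨u, hu⟩ : ∃ u, Qf r q x + 2 ≤ Qf r q u := by
    have := Qf_tendsto_top hrpos hqnn hw hS2
    rw [tendsto_atTop] at this
    obtain ⟨u, hu⟩ := (this (Qf r q x + 2)).exists
    exact ⟨u, hu⟩
  have hF0 : F 0 = 0 := by simp [hF]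
  set d₀ : ℝ := max 1 (u - x) with hd₀
  have hd₀pos : 0 < d₀ := lt_of_lt_of_le one_pos (le_max_left _ _)
  have hFd₀ : 2 ≤ F d₀ := by
    have h1 : Qf r q u ≤ Qf r q (x + d₀) := hQm (by
      have := le_max_right 1 (u - x); linarith)
    have h2 : Qf r q (x - d₀) ≤ Qf r q x := hQm (by linarith)
    simp only [hF]; linarith
  -- IVT
  obtain ⟨e, he, hFe⟩ : ∃ e ∈ Icc 0 d₀, F e = 2 := by
    have := intermediate_value_Icc hd₀pos.le hFc.continuousOn
    have h2 : (2:ℝ) ∈ Icc (F 0) (F d₀) := ⟨by rw [hF0]; norm_num, hFd₀⟩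
    obtain ⟨e, he, hFe⟩ := this h2
    exact ⟨e, he, hFe⟩
  have hepos : 0 < e := by
    rcases lt_or_eq_of_le he.1 with h | h
    · exact h
    · exfalso; rw [← h] at hFe; rw [hF0] at hFe; norm_num at hFe
  -- small d₁ with F < 2 on [0, d₁]
  obtain ⟨d₁, hd₁pos, hd₁⟩ : ∃ d₁ > 0, F d₁ < 2 := by
    have hc : Tendsto F (nhds 0) (nhds 0) := by
      have := hFc.continuousAt (x := 0)
      rwa [ContinuousAt, hF0] at this
    have : ∀ᶠ d in nhds (0:ℝ), F d < 2 := hc.eventually_lt_const (by norm_num)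
    rcases Metric.eventually_nhds_iff.mp this with ⟨ε, hε, hball⟩
    refine ⟨ε/2, by linarith, hball ?_⟩
    rw [Real.dist_eq, sub_zero, abs_of_pos (by linarith : (0:ℝ) < ε/2)]; linarith
  have hlb : ∀ e' ∈ {d : ℝ | 0 < d ∧ F d = 2}, d₁ ≤ e' := by
    intro e' he'
    by_contra hlt
    push_neg at hlt
    have := hFmono hlt.le
    rw [he'.2] at this
    linarith
  -- the closed set
  have hCeq : {d : ℝ | 0 < d ∧ F d = 2} = {d : ℝ | d₁ ≤ d ∧ F d = 2} := by
    ext d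
    simp only [mem_setOf_eq]
    constructor
    · intro hd; exact ⟨hlb d hd, hd.2⟩
    · intro hd; exact ⟨lt_of_lt_of_le hd₁pos hd.1, hd.2⟩
  have hclosed : IsClosed {d : ℝ | d₁ ≤ d ∧ F d = 2} := by
    have h1 : IsClosed {d : ℝ | d₁ ≤ d} := isClosed_Ici
    have h2 : IsClosed {d : ℝ | F d = 2} := isClosed_eq hFc continuous_const
    exact h1.inter h2
  have hne : {d : ℝ | 0 < d ∧ F d = 2}.Nonempty := ⟨e, hepos, hFe⟩
  have hbdd : BddBelow {d : ℝ | d₁ ≤ d ∧ F d = 2} := ⟨d₁, fun e' he' => he'.1⟩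
  have hmem : sInf {d : ℝ | d₁ ≤ d ∧ F d = 2} ∈ {d : ℝ | d₁ ≤ d ∧ F d = 2} :=
    hclosed.csInf_mem (hCeq ▸ hne) hbdd
  have hdfun : dfun r q x = sInf {d : ℝ | d₁ ≤ d ∧ F d = 2} := by
    rw [dfun, hSet, hCeq]
  constructor
  · rw [hdfun]; exact lt_of_lt_of_le hd₁pos hmem.1
  · rw [hdfun]; exact hmem.2


/-- approximation of an interval-integrable function by a continuous one, in L¹ of [a,b] -/
theorem exists_cont_approx {α : ℝ → ℝ} {a b : ℝ} (hab : a ≤ b)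
    (hα : IntegrableOn α (Icc a b) volume) {η : ℝ} (hη : 0 < η) :
    ∃ g : ℝ → ℝ, Continuous g ∧ IntervalIntegrable g volume a b ∧
      (∫ t in a..b, |α t - g t|) ≤ η := by
  set W : ℝ → ℝ := (Icc a b).indicator α with hW
  have hWint : Integrable W volume := (integrable_indicator_iff measurableSet_Icc).mpr hα
  obtain ⟨g, _, hg1, hgc, hgmem⟩ :=
    (memLp_one_iff_integrable.mpr hWint).exists_hasCompactSupport_eLpNorm_sub_le
      (ENNReal.one_ne_top) (ε := ENNReal.ofReal η) (by simp [hη])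
  have hgint : Integrable g volume := memLp_one_iff_integrable.mp hgmem
  refine ⟨g, hgc, hgint.intervalIntegrable, ?_⟩
  have hWg : Integrable (W - g) volume := hWint.sub hgint
  -- ∫ |W - g| over ℝ ≤ η
  have h1 : ENNReal.ofReal (∫ t, ‖W t - g t‖) = ∫⁻ t, ‖W t - g t‖₊ :=
    ofReal_integral_norm_eq_lintegral_enorm hWg
  have h2 : eLpNorm (W - g) 1 volume = ∫⁻ t, ‖W t - g t‖₊ := by
    rw [eLpNorm_one_eq_lintegral_enorm]; rfl
  have h3 : (∫ t, ‖W t - g t‖) ≤ η := by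
    have := hg1
    rw [h2, ← h1] at this
    exact (ENNReal.ofReal_le_ofReal_iff hη.le).mp this
  calc (∫ t in a..b, |α t - g t|)
      = ∫ t in Ioc a b, |α t - g t| := by rw [intervalIntegral.integral_of_le hab]
    _ = ∫ t in Ioc a b, ‖W t - g t‖ := by
        apply setIntegral_congr_fun measurableSet_Ioc
        intro t ht
        rw [hW]
        simp [Set.indicator_of_mem (Ioc_subset_Icc_self ht), Real.norm_eq_abs]
    _ ≤ ∫ t, ‖W t - g t‖ := by
        apply setIntegral_le_integral hWg.norm
        exact Filter.Eventually.of_forall (fun t => norm_nonneg _)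
    _ ≤ η := h3


theorem exp_sub_exp_le_aux {v u m : ℝ} (h : v ≤ u) (hu : u ≤ m) :
    Real.exp u - Real.exp v ≤ Real.exp m * (u - v) := by
  have hpos : (0:ℝ) < Real.exp (u - v) := Real.exp_pos _
  have h1 : 1 - (u - v) ≤ (Real.exp (u - v))⁻¹ := by
    have := Real.add_one_le_exp (-(u - v))
    rw [Real.exp_neg] at this
    linarith
  have hc : (Real.exp (u-v))⁻¹ * Real.exp (u-v) = 1 := inv_mul_cancel₀ hpos.ne'
  have h4 : Real.exp (u - v) - 1 ≤ (u - v) * Real.exp (u - v) := by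
    nlinarith [mul_le_mul_of_nonneg_right h1 hpos.le]
  have h3 : Real.exp u = Real.exp v * Real.exp (u - v) := by
    rw [← Real.exp_add]; ring_nf
  have h5 : Real.exp u ≤ Real.exp m := Real.exp_le_exp.mpr hu
  have h6 : Real.exp u - Real.exp v ≤ (u - v) * Real.exp u := by
    nlinarith [Real.exp_pos v]
  nlinarith [Real.exp_pos u]

theorem abs_exp_sub_exp_le {u v m : ℝ} (hu : u ≤ m) (hv : v ≤ m) :
    |Real.exp u - Real.exp v| ≤ Real.exp m * |u - v| := by
  rcases le_total v u with h | h
  · rw [abs_of_nonneg (by simp [Real.exp_le_exp, h] : (0:ℝ) ≤ Real.exp u - Real.exp v),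
      abs_of_nonneg (by linarith)]
    exact exp_sub_exp_le_aux h hu
  · rw [abs_sub_comm, abs_sub_comm u v,
      abs_of_nonneg (by simp [Real.exp_le_exp, h] : (0:ℝ) ≤ Real.exp v - Real.exp u),
      abs_of_nonneg (by linarith)]
    exact exp_sub_exp_le_aux h hv

theorem abs_intervalIntegral_le {f h : ℝ → ℝ} {a b : ℝ} (hab : a ≤ b)
    (hfi : IntervalIntegrable f volume a b) (hhi : IntervalIntegrable h volume a b)
    (hfh : ∀ t ∈ Icc a b, |f t| ≤ h t) : |∫ t in a..b, f t| ≤ ∫ t in a..b, h t := by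
  calc |∫ t in a..b, f t| ≤ ∫ t in a..b, |f t| := by
        simpa [Real.norm_eq_abs] using
          intervalIntegral.norm_integral_le_integral_norm (f := f) (μ := volume) hab
    _ ≤ ∫ t in a..b, h t := by
        apply intervalIntegral.integral_mono_on hab hfi.abs hhi
        intro t ht; exact hfh t ht

theorem prim_dist_le {f g : ℝ → ℝ} {a b : ℝ} (hab : a ≤ b)
    (hfi : IntervalIntegrable f volume a b) (hgi : IntervalIntegrable g volume a b) :
    ∀ x ∈ Icc a b, |∫ t in a..x, (f t - g t)| ≤ ∫ t in a..b, |f t - g t| := by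
  intro x hx
  have hfx : IntervalIntegrable f volume a x :=
    hfi.mono_set (by rw [Set.uIcc_of_le hx.1, Set.uIcc_of_le hab]; exact Icc_subset_Icc le_rfl hx.2)
  have hgx : IntervalIntegrable g volume a x :=
    hgi.mono_set (by rw [Set.uIcc_of_le hx.1, Set.uIcc_of_le hab]; exact Icc_subset_Icc le_rfl hx.2)
  have hfxb : IntervalIntegrable f volume x b :=
    hfi.mono_set (by rw [Set.uIcc_of_le hx.2, Set.uIcc_of_le hab]; exact Icc_subset_Icc hx.1 le_rfl)
  have hgxb : IntervalIntegrable g volume x b :=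
    hgi.mono_set (by rw [Set.uIcc_of_le hx.2, Set.uIcc_of_le hab]; exact Icc_subset_Icc hx.1 le_rfl)
  calc |∫ t in a..x, (f t - g t)| ≤ ∫ t in a..x, |f t - g t| := by
        simpa [Real.norm_eq_abs] using
          intervalIntegral.norm_integral_le_integral_norm (f := fun t => f t - g t)
            (μ := volume) hx.1
    _ ≤ ∫ t in a..b, |f t - g t| := by
        have hadd := intervalIntegral.integral_add_adjacent_intervals
          (hfx.sub hgx).abs (hfxb.sub hgxb).abs
        have hnn : 0 ≤ ∫ t in x..b, |f t - g t| :=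
          intervalIntegral.integral_nonneg hx.2 (fun u _ => abs_nonneg _)
        linarith [hadd]


/-- FTC for the exponential of a primitive of a locally integrable function -/
theorem expFTC {w : ℝ → ℝ} (hwi : ∀ a b : ℝ, IntervalIntegrable w volume a b)
    {Q : ℝ → ℝ} (hQ : ∀ a b : ℝ, Q b - Q a = ∫ t in a..b, w t) (hQc : Continuous Q)
    {a b : ℝ} (hab : a ≤ b) :
    Real.exp (Q b) - Real.exp (Q a) = ∫ t in a..b, w t * Real.exp (Q t) := by
  -- bound on |Q| over [a,b]
  obtain ⟨C, hC⟩ : ∃ C : ℝ, ∀ x ∈ Icc a b, |Q x| ≤ C := by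
    obtain ⟨C, hC⟩ := (isCompact_Icc (a := a) (b := b)).exists_bound_of_continuousOn
      (hQc.abs.continuousOn)
    exact ⟨C, fun x hx => by simpa using hC x hx⟩
  have hC0 : ∀ x ∈ Icc a b, Q x ≤ C := fun x hx => (abs_le.mp (hC x hx)).2
  set X : ℝ := Real.exp (Q b) - Real.exp (Q a) - ∫ t in a..b, w t * Real.exp (Q t) with hX
  set K : ℝ := Real.exp (C + 1) * (2 + ∫ t in a..b, |w t|) with hK
  have hKpos : 0 < K := by
    have : 0 ≤ ∫ t in a..b, |w t| :=
      intervalIntegral.integral_nonneg hab (fun u _ => abs_nonneg _)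
    positivity
  have hQIcc : IntegrableOn w (Icc a b) volume :=
    (intervalIntegrable_iff_integrableOn_Icc_of_le hab).mp (hwi a b)
  have hexpQc : Continuous fun t => Real.exp (Q t) := Real.continuous_exp.comp hQc
  have hwe : IntervalIntegrable (fun t => w t * Real.exp (Q t)) volume a b :=
    (hwi a b).mul_continuousOn hexpQc.continuousOn
  have key : ∀ η : ℝ, 0 < η → η ≤ 1 → |X| ≤ K * η := by
    intro η hη hη1
    obtain ⟨g, hgc, hgi, hga⟩ := exists_cont_approx hab hQIcc hη
    set Qg : ℝ → ℝ := fun x => Q a + ∫ t in a..x, g t with hQg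
    have hQgderiv : ∀ x : ℝ, HasDerivAt Qg (g x) x := by
      intro x
      have h1 : HasDerivAt (fun u => ∫ t in a..u, g t) (g x) x :=
        intervalIntegral.integral_hasDerivAt_right (hgc.intervalIntegrable a x)
          (hgc.stronglyMeasurable.stronglyMeasurableAtFilter) hgc.continuousAt
      simpa [hQg] using h1.const_add (Q a)
    have hQga : Qg a = Q a := by simp [hQg]
    -- distance between Q and Qg on [a,b]
    have hdist : ∀ x ∈ Icc a b, |Q x - Qg x| ≤ η := by
      intro x hx
      have h1 : Q x - Qg x = ∫ t in a..x, (w t - g t) := by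
        have h2 : Q x - Q a = ∫ t in a..x, w t := hQ a x
        have hwx : IntervalIntegrable w volume a x := hwi a x
        have hgx : IntervalIntegrable g volume a x := hgc.intervalIntegrable a x
        rw [intervalIntegral.integral_sub hwx hgx]
        simp only [hQg]
        linarith
      rw [h1]
      exact le_trans (prim_dist_le hab (hwi a b) hgi x hx) hga
    have hQgb : ∀ x ∈ Icc a b, Qg x ≤ C + 1 := by
      intro x hx
      have h1 := hdist x hx
      have h2 := hC0 x hx
      have := abs_le.mp h1
      linarith
    -- FTC for the smooth approximation
    have hftc : ∫ t in a..b, g t * Real.exp (Qg t) = Real.exp (Qg b) - Real.exp (Qg a) := by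
      have hderiv : ∀ x ∈ uIcc a b, HasDerivAt (fun u => Real.exp (Qg u))
          (Real.exp (Qg x) * g x) x := fun x _ => (hQgderiv x).exp
      have hcont : IntervalIntegrable (fun x => Real.exp (Qg x) * g x) volume a b := by
        apply Continuous.intervalIntegrable
        have hQgcont : Continuous Qg := by
          apply continuous_const.add
          exact intervalIntegral.continuous_primitive (fun c d => hgc.intervalIntegrable c d) a
        exact (Real.continuous_exp.comp hQgcont).mul hgc
      have := intervalIntegral.integral_eq_sub_of_hasDerivAt hderiv hcont
      rw [← this]
      congr 1; ext t; ring
    -- now the estimates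
    have hQgcont : Continuous Qg := by
      apply continuous_const.add
      exact intervalIntegral.continuous_primitive (fun c d => hgc.intervalIntegrable c d) a
    have hexpQgc : Continuous fun t => Real.exp (Qg t) := Real.continuous_exp.comp hQgcont
    -- |exp Q b - exp Qg b| ≤ exp(C+1) * η
    have hb1 : |Real.exp (Q b) - Real.exp (Qg b)| ≤ Real.exp (C + 1) * η := by
      have h1 := abs_exp_sub_exp_le (u := Q b) (v := Qg b) (m := C + 1)
        (by have := hC0 b ⟨hab, le_rfl⟩; linarith) (hQgb b ⟨hab, le_rfl⟩)
      have h2 := hdist b ⟨hab, le_rfl⟩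
      calc |Real.exp (Q b) - Real.exp (Qg b)| ≤ Real.exp (C+1) * |Q b - Qg b| := h1
        _ ≤ Real.exp (C + 1) * η := by
            apply mul_le_mul_of_nonneg_left h2 (Real.exp_pos _).le
    -- ∫ (g e^{Qg} - w e^{Q})
    have hsplit : (∫ t in a..b, g t * Real.exp (Qg t)) - (∫ t in a..b, w t * Real.exp (Q t)) =
        (∫ t in a..b, (g t - w t) * Real.exp (Qg t)) +
        (∫ t in a..b, w t * (Real.exp (Qg t) - Real.exp (Q t))) := by
      have i1 : IntervalIntegrable (fun t => (g t - w t) * Real.exp (Qg t)) volume a b :=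
        (hgi.sub (hwi a b)).mul_continuousOn hexpQgc.continuousOn
      have i2 : IntervalIntegrable (fun t => w t * (Real.exp (Qg t) - Real.exp (Q t)))
          volume a b :=
        (hwi a b).mul_continuousOn (hexpQgc.sub hexpQc).continuousOn
      rw [← intervalIntegral.integral_add i1 i2]
      rw [← intervalIntegral.integral_sub ((hgi).mul_continuousOn hexpQgc.continuousOn) hwe]
      congr 1; ext t; ring
    have he1 : |∫ t in a..b, (g t - w t) * Real.exp (Qg t)| ≤ Real.exp (C + 1) * η := by
      have h1 : |∫ t in a..b, (g t - w t) * Real.exp (Qg t)| ≤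
          ∫ t in a..b, |g t - w t| * Real.exp (C + 1) := by
        apply abs_intervalIntegral_le hab
          ((hgi.sub (hwi a b)).mul_continuousOn hexpQgc.continuousOn)
          ((hgi.sub (hwi a b)).abs.mul_const _)
        intro t ht
        rw [abs_mul, abs_of_pos (Real.exp_pos _)]
        apply mul_le_mul_of_nonneg_left _ (abs_nonneg _)
        exact Real.exp_le_exp.mpr (hQgb t ht)
      have h2 : (∫ t in a..b, |g t - w t| * Real.exp (C + 1)) =
          (∫ t in a..b, |g t - w t|) * Real.exp (C + 1) := by
        rw [← intervalIntegral.integral_mul_const]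
      have h3 : (∫ t in a..b, |g t - w t|) ≤ η := by
        have : (∫ t in a..b, |g t - w t|) = ∫ t in a..b, |w t - g t| := by
          congr 1; ext t; rw [abs_sub_comm]
        rw [this]; exact hga
      calc |∫ t in a..b, (g t - w t) * Real.exp (Qg t)|
          ≤ (∫ t in a..b, |g t - w t|) * Real.exp (C + 1) := by rw [← h2]; exact h1
        _ ≤ η * Real.exp (C + 1) :=
            mul_le_mul_of_nonneg_right h3 (Real.exp_pos _).le
        _ = Real.exp (C + 1) * η := by ring
    have he2 : |∫ t in a..b, w t * (Real.exp (Qg t) - Real.exp (Q t))| ≤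
        Real.exp (C + 1) * η * (∫ t in a..b, |w t|) := by
      have h1 : |∫ t in a..b, w t * (Real.exp (Qg t) - Real.exp (Q t))| ≤
          ∫ t in a..b, |w t| * (Real.exp (C + 1) * η) := by
        apply abs_intervalIntegral_le hab
          ((hwi a b).mul_continuousOn (hexpQgc.sub hexpQc).continuousOn)
          ((hwi a b).abs.mul_const _)
        intro t ht
        rw [abs_mul]
        apply mul_le_mul_of_nonneg_left _ (abs_nonneg _)
        have h2 := abs_exp_sub_exp_le (u := Qg t) (v := Q t) (m := C + 1) (hQgb t ht)
          (by have := hC0 t ht; linarith)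
        have h3 : |Qg t - Q t| ≤ η := by rw [abs_sub_comm]; exact hdist t ht
        calc |Real.exp (Qg t) - Real.exp (Q t)| ≤ Real.exp (C+1) * |Qg t - Q t| := h2
          _ ≤ Real.exp (C + 1) * η := mul_le_mul_of_nonneg_left h3 (Real.exp_pos _).le
      have h2 : (∫ t in a..b, |w t| * (Real.exp (C + 1) * η)) =
          (∫ t in a..b, |w t|) * (Real.exp (C + 1) * η) := by
        rw [← intervalIntegral.integral_mul_const]
      rw [h2] at h1
      calc |∫ t in a..b, w t * (Real.exp (Qg t) - Real.exp (Q t))|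
          ≤ (∫ t in a..b, |w t|) * (Real.exp (C + 1) * η) := h1
        _ = Real.exp (C + 1) * η * (∫ t in a..b, |w t|) := by ring
    -- assemble
    have hXeq : X = (Real.exp (Q b) - Real.exp (Qg b)) +
        ((∫ t in a..b, (g t - w t) * Real.exp (Qg t)) +
         (∫ t in a..b, w t * (Real.exp (Qg t) - Real.exp (Q t)))) := by
      rw [hX, ← hsplit, hftc, hQga]
      ring
    have hwabs : 0 ≤ ∫ t in a..b, |w t| :=
      intervalIntegral.integral_nonneg hab (fun u _ => abs_nonneg _)
    calc |X| ≤ |Real.exp (Q b) - Real.exp (Qg b)| +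
        (|∫ t in a..b, (g t - w t) * Real.exp (Qg t)| +
         |∫ t in a..b, w t * (Real.exp (Qg t) - Real.exp (Q t))|) := by
          rw [hXeq]; exact (abs_add_le _ _).trans (by gcongr; exact abs_add_le _ _)
      _ ≤ Real.exp (C+1) * η + (Real.exp (C+1) * η + Real.exp (C+1) * η * (∫ t in a..b, |w t|)) :=
          add_le_add hb1 (add_le_add he1 he2)
      _ = Real.exp (C + 1) * (2 + ∫ t in a..b, |w t|) * η := by ring
      _ = K * η := by rw [hK]
  -- conclude X = 0
  have : |X| = 0 := by
    by_contra hne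
    have hXpos : 0 < |X| := lt_of_le_of_ne (abs_nonneg X) (Ne.symm hne)
    set η := min 1 (|X| / (2 * K)) with hη
    have hηpos : 0 < η := lt_min one_pos (by positivity)
    have := key η hηpos (min_le_left _ _)
    have hle : K * η ≤ K * (|X| / (2 * K)) :=
      mul_le_mul_of_nonneg_left (min_le_right _ _) hKpos.le
    have : |X| ≤ |X| / 2 := by
      have h2 : K * (|X| / (2 * K)) = |X| / 2 := by field_simp
      linarith [this.trans hle, h2.le]
    linarith
  have := abs_eq_zero.mp this
  rw [hX] at this
  linarith




/-- Integration by parts for primitives of interval-integrable functions. -/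
theorem primIBP {α β A B : ℝ → ℝ}
    (hαi : ∀ a b : ℝ, IntervalIntegrable α volume a b)
    (hβi : ∀ a b : ℝ, IntervalIntegrable β volume a b)
    (hA : ∀ a b : ℝ, A b - A a = ∫ t in a..b, α t)
    (hB : ∀ a b : ℝ, B b - B a = ∫ t in a..b, β t)
    (hAc : Continuous A) (hBc : Continuous B)
    {a b : ℝ} (hab : a ≤ b) :
    A b * B b - A a * B a = ∫ t in a..b, (α t * B t + A t * β t) := by
  obtain ⟨CA, hCA⟩ : ∃ C : ℝ, ∀ x ∈ Icc a b, |A x| ≤ C := by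
    obtain ⟨C, hC⟩ := (isCompact_Icc (a := a) (b := b)).exists_bound_of_continuousOn
      (hAc.abs.continuousOn)
    exact ⟨C, fun x hx => by simpa using hC x hx⟩
  obtain ⟨CB, hCB⟩ : ∃ C : ℝ, ∀ x ∈ Icc a b, |B x| ≤ C := by
    obtain ⟨C, hC⟩ := (isCompact_Icc (a := a) (b := b)).exists_bound_of_continuousOn
      (hBc.abs.continuousOn)
    exact ⟨C, fun x hx => by simpa using hC x hx⟩
  have hCA0 : 0 ≤ CA := le_trans (abs_nonneg _) (hCA a ⟨le_rfl, hab⟩)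
  have hCB0 : 0 ≤ CB := le_trans (abs_nonneg _) (hCB a ⟨le_rfl, hab⟩)
  have hIα : IntegrableOn α (Icc a b) volume :=
    (intervalIntegrable_iff_integrableOn_Icc_of_le hab).mp (hαi a b)
  have hIβ : IntegrableOn β (Icc a b) volume :=
    (intervalIntegrable_iff_integrableOn_Icc_of_le hab).mp (hβi a b)
  have hint : IntervalIntegrable (fun t => α t * B t + A t * β t) volume a b :=
    ((hαi a b).mul_continuousOn hBc.continuousOn).add
      (((hβi a b).continuousOn_mul hAc.continuousOn))
  set X : ℝ := A b * B b - A a * B a - ∫ t in a..b, (α t * B t + A t * β t) with hX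
  set K : ℝ := CB + (CA + 1) + (CB + 1) + (∫ t in a..b, |α t|) + CA +
      ((∫ t in a..b, |β t|) + 1) with hK
  have hαabs : 0 ≤ ∫ t in a..b, |α t| :=
    intervalIntegral.integral_nonneg hab (fun u _ => abs_nonneg _)
  have hβabs : 0 ≤ ∫ t in a..b, |β t| :=
    intervalIntegral.integral_nonneg hab (fun u _ => abs_nonneg _)
  have hKpos : 0 < K := by rw [hK]; positivity
  have key : ∀ η : ℝ, 0 < η → η ≤ 1 → |X| ≤ K * η := by
    intro η hη hη1
    obtain ⟨gα, hgαc, hgαi, hgαa⟩ := exists_cont_approx hab hIα hη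
    obtain ⟨gβ, hgβc, hgβi, hgβa⟩ := exists_cont_approx hab hIβ hη
    set Ag : ℝ → ℝ := fun x => A a + ∫ t in a..x, gα t with hAg
    set Bg : ℝ → ℝ := fun x => B a + ∫ t in a..x, gβ t with hBg
    have hAgderiv : ∀ x : ℝ, HasDerivAt Ag (gα x) x := fun x => by
      simpa [hAg] using (intervalIntegral.integral_hasDerivAt_right
        (hgαc.intervalIntegrable a x) hgαc.stronglyMeasurable.stronglyMeasurableAtFilter
        hgαc.continuousAt).const_add (A a)
    have hBgderiv : ∀ x : ℝ, HasDerivAt Bg (gβ x) x := fun x => by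
      simpa [hBg] using (intervalIntegral.integral_hasDerivAt_right
        (hgβc.intervalIntegrable a x) hgβc.stronglyMeasurable.stronglyMeasurableAtFilter
        hgβc.continuousAt).const_add (B a)
    have hAgc : Continuous Ag := continuous_const.add
      (intervalIntegral.continuous_primitive (fun c d => hgαc.intervalIntegrable c d) a)
    have hBgc : Continuous Bg := continuous_const.add
      (intervalIntegral.continuous_primitive (fun c d => hgβc.intervalIntegrable c d) a)
    have hAga : Ag a = A a := by simp [hAg]
    have hBga : Bg a = B a := by simp [hBg]
    have hdistA : ∀ x ∈ Icc a b, |A x - Ag x| ≤ η := by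
      intro x hx
      have h1 : A x - Ag x = ∫ t in a..x, (α t - gα t) := by
        have h2 : A x - A a = ∫ t in a..x, α t := hA a x
        rw [intervalIntegral.integral_sub (hαi a x) (hgαc.intervalIntegrable a x)]
        simp only [hAg]; linarith
      rw [h1]
      exact le_trans (prim_dist_le hab (hαi a b) hgαi x hx) hgαa
    have hdistB : ∀ x ∈ Icc a b, |B x - Bg x| ≤ η := by
      intro x hx
      have h1 : B x - Bg x = ∫ t in a..x, (β t - gβ t) := by
        have h2 : B x - B a = ∫ t in a..x, β t := hB a x
        rw [intervalIntegral.integral_sub (hβi a x) (hgβc.intervalIntegrable a x)]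
        simp only [hBg]; linarith
      rw [h1]
      exact le_trans (prim_dist_le hab (hβi a b) hgβi x hx) hgβa
    have hAgb : ∀ x ∈ Icc a b, |Ag x| ≤ CA + 1 := by
      intro x hx
      have h := abs_sub_abs_le_abs_sub (Ag x) (A x)
      have h2 : |Ag x - A x| = |A x - Ag x| := abs_sub_comm _ _
      linarith [hdistA x hx, hCA x hx]
    have hBgb : ∀ x ∈ Icc a b, |Bg x| ≤ CB + 1 := by
      intro x hx
      have h := abs_sub_abs_le_abs_sub (Bg x) (B x)
      have h2 : |Bg x - B x| = |B x - Bg x| := abs_sub_comm _ _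
      linarith [hdistB x hx, hCB x hx]
    -- FTC for the product of smooth approximations
    have hftc : ∫ t in a..b, (gα t * Bg t + Ag t * gβ t) = Ag b * Bg b - Ag a * Bg a := by
      have hderiv : ∀ x ∈ uIcc a b, HasDerivAt (fun u => Ag u * Bg u)
          (gα x * Bg x + Ag x * gβ x) x := fun x _ => by
        exact (hAgderiv x).mul (hBgderiv x)
      have hcont : IntervalIntegrable (fun x => gα x * Bg x + Ag x * gβ x) volume a b :=
        Continuous.intervalIntegrable ((hgαc.mul hBgc).add (hAgc.mul hgβc)) a b
      exact intervalIntegral.integral_eq_sub_of_hasDerivAt hderiv hcont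
    -- boundary estimate
    have hb1 : |A b * B b - Ag b * Bg b| ≤ (CB + (CA + 1)) * η := by
      have hmem : b ∈ Icc a b := ⟨hab, le_rfl⟩
      have h1 : A b * B b - Ag b * Bg b = (A b - Ag b) * B b + Ag b * (B b - Bg b) := by ring
      rw [h1]
      calc |(A b - Ag b) * B b + Ag b * (B b - Bg b)|
          ≤ |(A b - Ag b) * B b| + |Ag b * (B b - Bg b)| := abs_add_le _ _
        _ = |A b - Ag b| * |B b| + |Ag b| * |B b - Bg b| := by rw [abs_mul, abs_mul]
        _ ≤ η * CB + (CA + 1) * η := by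
            apply add_le_add
            · exact mul_le_mul (hdistA b hmem) (hCB b hmem) (abs_nonneg _) hη.le
            · exact mul_le_mul (hAgb b hmem) (hdistB b hmem) (abs_nonneg _) (by linarith)
        _ = (CB + (CA + 1)) * η := by ring
    -- integral difference estimate
    have hsplit : (∫ t in a..b, (gα t * Bg t + Ag t * gβ t)) -
        (∫ t in a..b, (α t * B t + A t * β t)) =
        (∫ t in a..b, (gα t - α t) * Bg t) + (∫ t in a..b, α t * (Bg t - B t)) +
        ((∫ t in a..b, (Ag t - A t) * gβ t) + (∫ t in a..b, A t * (gβ t - β t))) := by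
      have i1 : IntervalIntegrable (fun t => (gα t - α t) * Bg t) volume a b :=
        (hgαi.sub (hαi a b)).mul_continuousOn hBgc.continuousOn
      have i2 : IntervalIntegrable (fun t => α t * (Bg t - B t)) volume a b :=
        (hαi a b).mul_continuousOn (hBgc.sub hBc).continuousOn
      have i3 : IntervalIntegrable (fun t => (Ag t - A t) * gβ t) volume a b :=
        Continuous.intervalIntegrable ((hAgc.sub hAc).mul hgβc) a b
      have i4 : IntervalIntegrable (fun t => A t * (gβ t - β t)) volume a b :=
        ((hgβi.sub (hβi a b)).continuousOn_mul hAc.continuousOn)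
      have i5 : IntervalIntegrable (fun t => gα t * Bg t + Ag t * gβ t) volume a b :=
        Continuous.intervalIntegrable ((hgαc.mul hBgc).add (hAgc.mul hgβc)) a b
      rw [← intervalIntegral.integral_add i3 i4, ← intervalIntegral.integral_add i1 i2,
        ← intervalIntegral.integral_add (i1.add i2) (i3.add i4),
        ← intervalIntegral.integral_sub i5 hint]
      congr 1; ext t
      ring
    have he1 : |∫ t in a..b, (gα t - α t) * Bg t| ≤ (CB + 1) * η := by
      have h1 : |∫ t in a..b, (gα t - α t) * Bg t| ≤ ∫ t in a..b, |gα t - α t| * (CB + 1) := by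
        apply abs_intervalIntegral_le hab
          ((hgαi.sub (hαi a b)).mul_continuousOn hBgc.continuousOn)
          ((hgαi.sub (hαi a b)).abs.mul_const _)
        intro t ht
        rw [abs_mul]
        exact mul_le_mul_of_nonneg_left (hBgb t ht) (abs_nonneg _)
      rw [intervalIntegral.integral_mul_const] at h1
      have h3 : (∫ t in a..b, |gα t - α t|) ≤ η := by
        have : (∫ t in a..b, |gα t - α t|) = ∫ t in a..b, |α t - gα t| := by
          congr 1; ext t; rw [abs_sub_comm]
        rw [this]; exact hgαa
      calc |∫ t in a..b, (gα t - α t) * Bg t| ≤ (∫ t in a..b, |gα t - α t|) * (CB+1) := h1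
        _ ≤ η * (CB + 1) := mul_le_mul_of_nonneg_right h3 (by linarith)
        _ = (CB + 1) * η := by ring
    have he2 : |∫ t in a..b, α t * (Bg t - B t)| ≤ (∫ t in a..b, |α t|) * η := by
      have h1 : |∫ t in a..b, α t * (Bg t - B t)| ≤ ∫ t in a..b, |α t| * η := by
        apply abs_intervalIntegral_le hab
          ((hαi a b).mul_continuousOn (hBgc.sub hBc).continuousOn)
          ((hαi a b).abs.mul_const _)
        intro t ht
        rw [abs_mul]
        apply mul_le_mul_of_nonneg_left _ (abs_nonneg _)
        rw [Pi.sub_apply, abs_sub_comm]; exact hdistB t ht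
      rw [intervalIntegral.integral_mul_const] at h1
      exact h1
    have he3 : |∫ t in a..b, (Ag t - A t) * gβ t| ≤ ((∫ t in a..b, |β t|) + 1) * η := by
      have h1 : |∫ t in a..b, (Ag t - A t) * gβ t| ≤ ∫ t in a..b, η * |gβ t| := by
        apply abs_intervalIntegral_le hab
          (Continuous.intervalIntegrable ((hAgc.sub hAc).mul hgβc) a b)
          (hgβi.abs.const_mul _)
        intro t ht
        rw [Pi.mul_apply, Pi.sub_apply, abs_mul]
        apply mul_le_mul_of_nonneg_right _ (abs_nonneg _)
        rw [abs_sub_comm]; exact hdistA t ht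
      have h2 : (∫ t in a..b, η * |gβ t|) = η * ∫ t in a..b, |gβ t| := by
        rw [intervalIntegral.integral_const_mul]
      have h3 : (∫ t in a..b, |gβ t|) ≤ (∫ t in a..b, |β t|) + 1 := by
        have h4 : ∀ t ∈ Icc a b, |gβ t| ≤ |β t| + |β t - gβ t| := by
          intro t _
          have := abs_sub_abs_le_abs_sub (gβ t) (β t)
          rw [abs_sub_comm (β t) (gβ t)] at *
          linarith [abs_sub_abs_le_abs_sub (gβ t) (β t), abs_sub_comm (gβ t) (β t)]
        have h5 : (∫ t in a..b, |gβ t|) ≤ ∫ t in a..b, (|β t| + |β t - gβ t|) := by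
          apply intervalIntegral.integral_mono_on hab hgβi.abs
            ((hβi a b).abs.add ((hβi a b).sub hgβi).abs)
          intro t ht; exact h4 t ht
        rw [intervalIntegral.integral_add (hβi a b).abs ((hβi a b).sub hgβi).abs] at h5
        linarith [hgβa]
      calc |∫ t in a..b, (Ag t - A t) * gβ t| ≤ η * ∫ t in a..b, |gβ t| := by rw [← h2]; exact h1
        _ ≤ η * ((∫ t in a..b, |β t|) + 1) := mul_le_mul_of_nonneg_left h3 hη.le
        _ = ((∫ t in a..b, |β t|) + 1) * η := by ring
    have he4 : |∫ t in a..b, A t * (gβ t - β t)| ≤ CA * η := by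
      have h1 : |∫ t in a..b, A t * (gβ t - β t)| ≤ ∫ t in a..b, CA * |gβ t - β t| := by
        apply abs_intervalIntegral_le hab
          ((hgβi.sub (hβi a b)).continuousOn_mul hAc.continuousOn)
          ((hgβi.sub (hβi a b)).abs.const_mul _)
        intro t ht
        rw [abs_mul]
        exact mul_le_mul_of_nonneg_right (hCA t ht) (abs_nonneg _)
      rw [intervalIntegral.integral_const_mul] at h1
      have h3 : (∫ t in a..b, |gβ t - β t|) ≤ η := by
        have : (∫ t in a..b, |gβ t - β t|) = ∫ t in a..b, |β t - gβ t| := by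
          congr 1; ext t; rw [abs_sub_comm]
        rw [this]; exact hgβa
      calc |∫ t in a..b, A t * (gβ t - β t)| ≤ CA * ∫ t in a..b, |gβ t - β t| := h1
        _ ≤ CA * η := mul_le_mul_of_nonneg_left h3 hCA0
    -- assemble
    have hXeq : X = (A b * B b - Ag b * Bg b) +
        ((∫ t in a..b, (gα t - α t) * Bg t) + (∫ t in a..b, α t * (Bg t - B t)) +
         ((∫ t in a..b, (Ag t - A t) * gβ t) + (∫ t in a..b, A t * (gβ t - β t)))) := by
      rw [hX, ← hsplit, hftc, hAga, hBga]
      ring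
    calc |X| ≤ |A b * B b - Ag b * Bg b| +
        (|∫ t in a..b, (gα t - α t) * Bg t| + |∫ t in a..b, α t * (Bg t - B t)| +
         (|∫ t in a..b, (Ag t - A t) * gβ t| + |∫ t in a..b, A t * (gβ t - β t)|)) := by
          rw [hXeq]
          exact (abs_add_le _ _).trans (add_le_add le_rfl ((abs_add_le _ _).trans
            (add_le_add (abs_add_le _ _) (abs_add_le _ _))))
      _ ≤ (CB + (CA+1)) * η + ((CB + 1) * η + (∫ t in a..b, |α t|) * η +
          (((∫ t in a..b, |β t|) + 1) * η + CA * η)) :=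
          add_le_add hb1 (add_le_add (add_le_add he1 he2) (add_le_add he3 he4))
      _ = K * η := by rw [hK]; ring
  -- conclude X = 0
  have : |X| = 0 := by
    by_contra hne
    have hXpos : 0 < |X| := lt_of_le_of_ne (abs_nonneg X) (Ne.symm hne)
    set η := min 1 (|X| / (2 * K)) with hη
    have hηpos : 0 < η := lt_min one_pos (by positivity)
    have hk := key η hηpos (min_le_left _ _)
    have hle : K * η ≤ K * (|X| / (2 * K)) :=
      mul_le_mul_of_nonneg_left (min_le_right _ _) hKpos.le
    have : |X| ≤ |X| / 2 := by
      have h2 : K * (|X| / (2 * K)) = |X| / 2 := by field_simp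
      linarith [hk.trans hle, h2.le]
    linarith
  have := abs_eq_zero.mp this
  rw [hX] at this
  linarith


/-- general-endpoint version of expFTC -/
theorem expFTC' {w : ℝ → ℝ} (hwi : ∀ a b : ℝ, IntervalIntegrable w volume a b)
    {Q : ℝ → ℝ} (hQ : ∀ a b : ℝ, Q b - Q a = ∫ t in a..b, w t) (hQc : Continuous Q)
    (a b : ℝ) :
    Real.exp (Q b) - Real.exp (Q a) = ∫ t in a..b, w t * Real.exp (Q t) := by
  rcases le_total a b with h | h
  · exact expFTC hwi hQ hQc h
  · have := expFTC hwi hQ hQc h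
    rw [intervalIntegral.integral_symm]
    linarith

/-- general-endpoint version of primIBP -/
theorem primIBP' {α β A B : ℝ → ℝ}
    (hαi : ∀ a b : ℝ, IntervalIntegrable α volume a b)
    (hβi : ∀ a b : ℝ, IntervalIntegrable β volume a b)
    (hA : ∀ a b : ℝ, A b - A a = ∫ t in a..b, α t)
    (hB : ∀ a b : ℝ, B b - B a = ∫ t in a..b, β t)
    (hAc : Continuous A) (hBc : Continuous B) (a b : ℝ) :
    A b * B b - A a * B a = ∫ t in a..b, (α t * B t + A t * β t) := by
  rcases le_total a b with h | h
  · exact primIBP hαi hβi hA hB hAc hBc h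
  · have := primIBP hαi hβi hA hB hAc hBc h
    rw [intervalIntegral.integral_symm]
    linarith

/-- the candidate solution -/
def Ysol (r q f : ℝ → ℝ) (T : ℝ) : ℝ → ℝ :=
  fun x => Real.exp (Qf r q x) * ∫ t in x..T, Real.exp (-(Qf r q t)) * (f t / r t)

section YsolFacts

variable {f : ℝ → ℝ} {T : ℝ}

theorem gsol_loc (hr : Continuous r) (hrpos : ∀ x, 0 < r x)
    (hq : LocallyIntegrable q volume) (hfli : LocallyIntegrable f volume) : LocallyIntegrable (fun t => Real.exp (-(Qf r q t)) * (f t / r t)) volume := by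
  have hw := w_loc hr hrpos hq
  have hc : Continuous fun t => Real.exp (-(Qf r q t)) * (r t)⁻¹ :=
    (Real.continuous_exp.comp (Qf_continuous hw).neg).mul (hr.inv₀ (fun t => (hrpos t).ne'))
  have h := LocIntMulCont hfli hc
  have : (fun x => f x * (Real.exp (-(Qf r q x)) * (r x)⁻¹)) =
      fun t => Real.exp (-(Qf r q t)) * (f t / r t) := by
    funext t; rw [div_eq_mul_inv]; ring
  rwa [this] at h

theorem Ysol_continuous (hr : Continuous r) (hrpos : ∀ x, 0 < r x)
    (hq : LocallyIntegrable q volume) (hfli : LocallyIntegrable f volume) (T : ℝ) :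
    Continuous (Ysol r q f T) := by
  have hw := w_loc hr hrpos hq
  have hgli := gsol_loc hr hrpos hq hfli
  apply Continuous.mul (Real.continuous_exp.comp (Qf_continuous hw))
  have h : (fun x => ∫ t in x..T, Real.exp (-(Qf r q t)) * (f t / r t)) =
      fun x => - ∫ t in T..x, Real.exp (-(Qf r q t)) * (f t / r t) := by
    funext x; rw [← intervalIntegral.integral_symm]
  rw [h]
  exact (intervalIntegral.continuous_primitive (fun a b => locInt_ii hgli a b) T).neg

theorem Ysol_eq_zero (hfT : ∀ t, T < t → f t = 0) : ∀ x, T ≤ x → Ysol r q f T x = 0 := by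
  intro x hx
  have hz : (∫ t in T..x, Real.exp (-(Qf r q t)) * (f t / r t)) = 0 := by
    rw [intervalIntegral.integral_of_le hx]
    rw [setIntegral_congr_fun measurableSet_Ioc
      (g := fun _ => (0:ℝ)) (fun t ht => by rw [hfT t ht.1]; ring)]
    simp
  have : (∫ t in x..T, Real.exp (-(Qf r q t)) * (f t / r t)) = 0 := by
    rw [intervalIntegral.integral_symm, hz]; ring
  rw [Ysol, this]; ring

theorem Ysol_plateau (hr : Continuous r) (hrpos : ∀ x, 0 < r x)
    (hq : LocallyIntegrable q volume) (hfli : LocallyIntegrable f volume)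
    {s : ℝ} (hfs : ∀ t, t ≤ s → f t = 0) : ∀ x, x ≤ s →
    Ysol r q f T x = Real.exp (Qf r q x) *
      ∫ t in s..T, Real.exp (-(Qf r q t)) * (f t / r t) := by
  intro x hx
  have hgli := gsol_loc hr hrpos hq hfli
  have hz : (∫ t in x..s, Real.exp (-(Qf r q t)) * (f t / r t)) = 0 := by
    rw [intervalIntegral.integral_of_le hx]
    rw [setIntegral_congr_fun measurableSet_Ioc
      (g := fun _ => (0:ℝ)) (fun t ht => by rw [hfs t ht.2]; ring)]
    simp
  have hadd := intervalIntegral.integral_add_adjacent_intervals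
    (locInt_ii hgli x s) (locInt_ii hgli s T)
  rw [Ysol]
  rw [← hadd, hz, zero_add]

theorem Ysol_nonneg (hrpos : ∀ x, 0 < r x) (hfnn : ∀ t, 0 ≤ f t)
    (hfT : ∀ t, T < t → f t = 0) : ∀ x, 0 ≤ Ysol r q f T x := by
  intro x
  have hgnn : ∀ t, 0 ≤ Real.exp (-(Qf r q t)) * (f t / r t) := fun t =>
    mul_nonneg (Real.exp_pos _).le (div_nonneg (hfnn t) (hrpos t).le)
  rcases le_total x T with h | h
  · apply mul_nonneg (Real.exp_pos _).le
    exact intervalIntegral.integral_nonneg h (fun u _ => hgnn u)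
  · rw [Ysol_eq_zero hfT x h]

theorem Ysol_isSolution (hr : Continuous r) (hrpos : ∀ x, 0 < r x)
    (hq : LocallyIntegrable q volume) (hqnn : ∀ x, 0 ≤ q x)
    (hfli : LocallyIntegrable f volume) (hS1 : S1E r q = ⊤)
    {s : ℝ} (hfs : ∀ t, t ≤ s → f t = 0) (hfT : ∀ t, T < t → f t = 0) :
    IsSolution r q f (Ysol r q f T) := by
  have hw := w_loc hr hrpos hq
  have hQc := Qf_continuous hw
  have hgli := gsol_loc hr hrpos hq hfli
  have hEc : Continuous fun x => Real.exp (Qf r q x) := Real.continuous_exp.comp hQc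
  refine ⟨Ysol_continuous hr hrpos hq hfli T, ?_, ?_, ?_⟩
  · -- the integral identity
    intro a b
    set g : ℝ → ℝ := fun t => Real.exp (-(Qf r q t)) * (f t / r t) with hg
    set G : ℝ → ℝ := fun x => ∫ t in x..T, g t with hG
    have hGc : Continuous G := by
      have h : G = fun x => - ∫ t in T..x, g t := by
        funext x; rw [hG, ← intervalIntegral.integral_symm]
      rw [h]
      exact (intervalIntegral.continuous_primitive (fun a b => locInt_ii hgli a b) T).neg
    have hGsub : ∀ a b : ℝ, G b - G a = ∫ t in a..b, -(g t) := by
      intro a b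
      have hadd := intervalIntegral.integral_add_adjacent_intervals
        (locInt_ii hgli a b) (locInt_ii hgli b T)
      rw [intervalIntegral.integral_neg]
      simp only [hG]
      linarith
    have hEsub : ∀ a b : ℝ, Real.exp (Qf r q b) - Real.exp (Qf r q a) =
        ∫ t in a..b, (q t / r t) * Real.exp (Qf r q t) :=
      expFTC' (fun a b => locInt_ii hw a b) (fun a b => (Qf_sub hw a b)) hQc
    have hkey := primIBP' (α := fun t => (q t / r t) * Real.exp (Qf r q t))
      (β := fun t => -(g t)) (A := fun x => Real.exp (Qf r q x)) (B := G)
      (fun a b => (locInt_ii hw a b).mul_continuousOn hEc.continuousOn)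
      (fun a b => (locInt_ii hgli a b).neg)
      hEsub hGsub hEc hGc a b
    have hY : Ysol r q f T = fun x => Real.exp (Qf r q x) * G x := rfl
    rw [hY]
    rw [hkey]
    congr 1
    funext t
    have hrt := (hrpos t).ne'
    have hexp : Real.exp (Qf r q t) * Real.exp (-(Qf r q t)) = 1 := by
      rw [← Real.exp_add]; simp
    have : Real.exp (Qf r q t) * g t = f t / r t := by
      rw [hg]
      calc Real.exp (Qf r q t) * (Real.exp (-(Qf r q t)) * (f t / r t))
          = (Real.exp (Qf r q t) * Real.exp (-(Qf r q t))) * (f t / r t) := by ring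
        _ = f t / r t := by rw [hexp]; ring
    have hgoal : q t / r t * Real.exp (Qf r q t) * G t + Real.exp (Qf r q t) * -(g t) =
        (q t * (Real.exp (Qf r q t) * G t) - f t) / r t := by
      rw [sub_div]
      have h2 : Real.exp (Qf r q t) * -(g t) = -(f t / r t) := by
        rw [← this]; ring
      rw [h2]
      have h3 : q t * (Real.exp (Qf r q t) * G t) / r t =
          q t / r t * Real.exp (Qf r q t) * G t := by ring
      rw [h3]
      ring
    exact hgoal
  · -- tendsto at bot
    have hplat := Ysol_plateau (T := T) hr hrpos hq hfli hfs
    have hQb := Qf_tendsto_bot hrpos hqnn hw hS1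
    have hEtend : Tendsto (fun x => Real.exp (Qf r q x)) atBot (nhds 0) :=
      Real.tendsto_exp_atBot.comp hQb
    have h0 : Tendsto (fun x => Real.exp (Qf r q x) *
        ∫ t in s..T, Real.exp (-(Qf r q t)) * (f t / r t)) atBot (nhds 0) := by
      have := hEtend.mul_const (∫ t in s..T, Real.exp (-(Qf r q t)) * (f t / r t))
      simpa using this
    apply h0.congr'
    filter_upwards [eventually_le_atBot s] with x hx
    exact (hplat x hx).symm
  · -- tendsto at top
    have h0 : Tendsto (fun _ : ℝ => (0:ℝ)) atTop (nhds 0) := tendsto_const_nhds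
    apply h0.congr'
    filter_upwards [eventually_ge_atTop T] with x hx
    exact (Ysol_eq_zero hfT x hx).symm

end YsolFacts

theorem Ysol_lower (hr : Continuous r) (hrpos : ∀ x, 0 < r x)
    (hq : LocallyIntegrable q volume) (hqnn : ∀ x, 0 ≤ q x)
    {f : ℝ → ℝ} (hfli : LocallyIntegrable f volume) (hfnn : ∀ t, 0 ≤ f t)
    {a b T x : ℝ} (hf1 : ∀ t ∈ Ioc a b, 1 ≤ f t)
    (hab : a ≤ b) (hbT : b ≤ T) (hxa : x ≤ a)
    (hQ4 : Qf r q b - Qf r q x ≤ 4)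
    {ε : ℝ} (hε : 0 < ε) (hqe : ∀ t ∈ Ioc a b, q t ≤ ε) :
    Real.exp (-4 : ℝ) * ((Qf r q b - Qf r q a) / ε) ≤ Ysol r q f T x := by
  have hw := w_loc hr hrpos hq
  have hgli := gsol_loc hr hrpos hq hfli
  set g : ℝ → ℝ := fun t => Real.exp (-(Qf r q t)) * (f t / r t) with hg
  have hgnn : ∀ t, 0 ≤ g t := fun t =>
    mul_nonneg (Real.exp_pos _).le (div_nonneg (hfnn t) (hrpos t).le)
  -- split the integral
  have hsplit : (∫ t in x..T, g t) =
      (∫ t in x..a, g t) + (∫ t in a..b, g t) + (∫ t in b..T, g t) := by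
    have h1 := intervalIntegral.integral_add_adjacent_intervals
      (locInt_ii hgli x a) (locInt_ii hgli a b)
    have h2 := intervalIntegral.integral_add_adjacent_intervals
      ((locInt_ii hgli x a).trans (locInt_ii hgli a b)) (locInt_ii hgli b T)
    linarith [h1, h2]
  have hnn1 : 0 ≤ ∫ t in x..a, g t :=
    intervalIntegral.integral_nonneg hxa (fun u _ => hgnn u)
  have hnn3 : 0 ≤ ∫ t in b..T, g t :=
    intervalIntegral.integral_nonneg hbT (fun u _ => hgnn u)
  -- middle integral lower bound
  have hmid : Real.exp (-(Qf r q b)) / ε * (Qf r q b - Qf r q a) ≤ ∫ t in a..b, g t := by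
    have hQab : Qf r q b - Qf r q a = ∫ t in Ioc a b, (q t / r t) := by
      rw [Qf_sub hw a b, intervalIntegral.integral_of_le hab]
    have hint1 : IntegrableOn (fun t => Real.exp (-(Qf r q b)) / ε * (q t / r t))
        (Ioc a b) volume := by
      have := ((intervalIntegrable_iff_integrableOn_Ioc_of_le hab).mp
        (locInt_ii hw a b)).const_mul (Real.exp (-(Qf r q b)) / ε)
      exact this
    have hint2 : IntegrableOn g (Ioc a b) volume :=
      (intervalIntegrable_iff_integrableOn_Ioc_of_le hab).mp (locInt_ii hgli a b)
    have hptwise : ∀ t ∈ Ioc a b,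
        Real.exp (-(Qf r q b)) / ε * (q t / r t) ≤ g t := by
      intro t ht
      have hrt := hrpos t
      have hQt : Qf r q t ≤ Qf r q b := Qf_mono hrpos hqnn hw ht.2
      have hE : Real.exp (-(Qf r q b)) ≤ Real.exp (-(Qf r q t)) :=
        Real.exp_le_exp.mpr (by linarith)
      have hq1 : q t / r t ≤ ε * (f t / r t) := by
        have h1 : q t ≤ ε * f t := by
          have := hf1 t ht
          have := hqe t ht
          nlinarith [hε.le]
        have h2 := (div_le_div_iff_of_pos_right hrt).mpr h1
        calc q t / r t ≤ ε * f t / r t := h2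
          _ = ε * (f t / r t) := by ring
      calc Real.exp (-(Qf r q b)) / ε * (q t / r t)
          ≤ Real.exp (-(Qf r q b)) / ε * (ε * (f t / r t)) := by
            apply mul_le_mul_of_nonneg_left hq1 (by positivity)
        _ = Real.exp (-(Qf r q b)) * (f t / r t) := by
            field_simp
        _ ≤ Real.exp (-(Qf r q t)) * (f t / r t) :=
            mul_le_mul_of_nonneg_right hE (div_nonneg (hfnn t) hrt.le)
    have hmono := setIntegral_mono_on hint1 hint2 measurableSet_Ioc hptwise
    have hconst : ∫ t in Ioc a b, Real.exp (-(Qf r q b)) / ε * (q t / r t) =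
        Real.exp (-(Qf r q b)) / ε * ∫ t in Ioc a b, (q t / r t) := by
      rw [MeasureTheory.integral_const_mul]
    rw [hconst, ← hQab] at hmono
    rw [intervalIntegral.integral_of_le hab]
    exact hmono
  -- assemble
  have hYx : Ysol r q f T x = Real.exp (Qf r q x) * ∫ t in x..T, g t := rfl
  have hQba : 0 ≤ Qf r q b - Qf r q a := by
    have := Qf_mono hrpos hqnn hw hab; linarith
  have h1 : Real.exp (-(Qf r q b)) / ε * (Qf r q b - Qf r q a) ≤ ∫ t in x..T, g t := by
    rw [hsplit]; linarith
  have h2 : Real.exp (Qf r q x) * (Real.exp (-(Qf r q b)) / ε * (Qf r q b - Qf r q a)) ≤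
      Ysol r q f T x := by
    rw [hYx]
    exact mul_le_mul_of_nonneg_left h1 (Real.exp_pos _).le
  have h3 : Real.exp (-4 : ℝ) * ((Qf r q b - Qf r q a) / ε) ≤
      Real.exp (Qf r q x) * (Real.exp (-(Qf r q b)) / ε * (Qf r q b - Qf r q a)) := by
    have hE4 : Real.exp (-4 : ℝ) ≤ Real.exp (Qf r q x) * Real.exp (-(Qf r q b)) := by
      rw [← Real.exp_add]
      exact Real.exp_le_exp.mpr (by linarith)
    calc Real.exp (-4 : ℝ) * ((Qf r q b - Qf r q a) / ε)
        ≤ (Real.exp (Qf r q x) * Real.exp (-(Qf r q b))) * ((Qf r q b - Qf r q a) / ε) := by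
          apply mul_le_mul_of_nonneg_right hE4 (by positivity)
      _ = Real.exp (Qf r q x) * (Real.exp (-(Qf r q b)) / ε * (Qf r q b - Qf r q a)) := by
          ring
  linarith

/-- uniqueness of solutions -/
theorem sol_unique (hr : Continuous r) (hrpos : ∀ x, 0 < r x)
    (hq : LocallyIntegrable q volume) (hqnn : ∀ x, 0 ≤ q x) (hS2 : S2E r q = ⊤)
    {f y₁ y₂ : ℝ → ℝ}
    (hfri : ∀ a b : ℝ, IntervalIntegrable (fun t => f t / r t) volume a b)
    (h1 : IsSolution r q f y₁) (h2 : IsSolution r q f y₂) : y₁ = y₂ := by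
  have hw := w_loc hr hrpos hq
  set z : ℝ → ℝ := fun x => y₁ x - y₂ x with hz
  have hzc : Continuous z := h1.1.sub h2.1
  have hzid : ∀ a b : ℝ, z b - z a = ∫ t in a..b, (q t / r t) * z t := by
    intro a b
    have e1 := h1.2.1 a b
    have e2 := h2.2.1 a b
    have hsplit : ∀ y : ℝ → ℝ, Continuous y →
        (∀ t : ℝ, (q t * y t - f t) / r t = (q t / r t) * y t - f t / r t) := by
      intro y _ t
      ring
    have i1 : IntervalIntegrable (fun t => (q t / r t) * y₁ t) volume a b :=
      locInt_ii (LocIntMulCont hw h1.1) a b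
    have i2 : IntervalIntegrable (fun t => (q t / r t) * y₂ t) volume a b :=
      locInt_ii (LocIntMulCont hw h2.1) a b
    have e1' : y₁ b - y₁ a = (∫ t in a..b, (q t / r t) * y₁ t) - ∫ t in a..b, f t / r t := by
      rw [e1]
      rw [show (fun t => (q t * y₁ t - f t) / r t) =
        (fun t => (q t / r t) * y₁ t - f t / r t) from funext (hsplit y₁ h1.1)]
      exact intervalIntegral.integral_sub i1 (hfri a b)
    have e2' : y₂ b - y₂ a = (∫ t in a..b, (q t / r t) * y₂ t) - ∫ t in a..b, f t / r t := by
      rw [e2]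
      rw [show (fun t => (q t * y₂ t - f t) / r t) =
        (fun t => (q t / r t) * y₂ t - f t / r t) from funext (hsplit y₂ h2.1)]
      exact intervalIntegral.integral_sub i2 (hfri a b)
    have e3 : (∫ t in a..b, (q t / r t) * y₁ t) - (∫ t in a..b, (q t / r t) * y₂ t) =
        ∫ t in a..b, (q t / r t) * z t := by
      rw [← intervalIntegral.integral_sub i1 i2]
      congr 1; funext t; simp only [hz]; ring
    simp only [hz]
    linarith
  have hztop : Tendsto z atTop (nhds 0) := by
    have := h1.2.2.2.sub h2.2.2.2
    simpa using this
  -- key claim: any function with these properties is ≤ 0 everywhere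
  have claim : ∀ u : ℝ → ℝ, Continuous u →
      (∀ a b : ℝ, u b - u a = ∫ t in a..b, (q t / r t) * u t) →
      Tendsto u atTop (nhds 0) → ∀ x₁, u x₁ ≤ 0 := by
    intro u huc huid hutop x₁
    by_contra hpos
    push_neg at hpos
    set m := u x₁ with hm
    -- find X ≥ x₁ with |u X| < m/2
    have hev : ∀ᶠ x in atTop, |u x| < m / 2 := by
      have := hutop.eventually (eventually_abs_sub_lt 0 (by linarith : (0:ℝ) < m/2))
      simpa using this
    obtain ⟨X, hX1, hX2⟩ : ∃ X, x₁ ≤ X ∧ |u X| < m / 2 :=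
      ((eventually_ge_atTop x₁).and hev).exists
    set B : Set ℝ := {x ∈ Icc x₁ X | u x ≤ m / 2} with hB
    have hXB : X ∈ B := ⟨⟨hX1, le_rfl⟩, (le_abs_self _).trans hX2.le⟩
    have hBclosed : IsClosed B := by
      have h1 : IsClosed (Icc x₁ X) := isClosed_Icc
      have h2 : IsClosed {x : ℝ | u x ≤ m / 2} := isClosed_le huc continuous_const
      exact h1.inter h2
    have hBbdd : BddBelow B := ⟨x₁, fun e he => he.1.1⟩
    have hBne : B.Nonempty := ⟨X, hXB⟩
    set x₂ := sInf B with hx₂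
    have hx₂B : x₂ ∈ B := hBclosed.csInf_mem hBne hBbdd
    have hx₂1 : x₁ ≤ x₂ := hx₂B.1.1
    have hx₂lt : x₁ < x₂ := by
      rcases lt_or_eq_of_le hx₂1 with h | h
      · exact h
      · exfalso
        have := hx₂B.2
        rw [← h] at this
        simp only [← hm] at this
        linarith
    have hlow : ∀ t ∈ Ico x₁ x₂, m / 2 < u t := by
      intro t ht
      by_contra hle
      push_neg at hle
      have htB : t ∈ B := ⟨⟨ht.1, le_trans ht.2.le hx₂B.1.2⟩, hle⟩
      have := csInf_le hBbdd htB
      exact absurd this (not_le.mpr ht.2)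
    have hx₂ge : m / 2 ≤ u x₂ := by
      have hne : (nhdsWithin x₂ (Ico x₁ x₂)).NeBot := by
        rw [← mem_closure_iff_nhdsWithin_neBot, closure_Ico hx₂lt.ne]
        exact ⟨hx₂lt.le, le_rfl⟩
      have htend : Tendsto u (nhdsWithin x₂ (Ico x₁ x₂)) (nhds (u x₂)) :=
        huc.continuousAt.continuousWithinAt.tendsto
      apply ge_of_tendsto htend
      filter_upwards [self_mem_nhdsWithin] with t ht
      exact (hlow t ht).le
    have hzub : ∀ t ∈ Icc x₁ x₂, 0 ≤ u t := by
      intro t ht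
      rcases lt_or_eq_of_le ht.2 with h | h
      · exact (by linarith : (0:ℝ) ≤ m/2).trans (hlow t ⟨ht.1, h⟩).le
      · rw [h]; linarith
    have hint : 0 ≤ ∫ t in x₁..x₂, (q t / r t) * u t := by
      apply intervalIntegral.integral_nonneg hx₂lt.le
      intro t ht
      exact mul_nonneg (div_nonneg (hqnn t) (hrpos t).le) (hzub t ht)
    have hid := huid x₁ x₂
    have := hx₂B.2
    linarith
  have hz1 : ∀ x, z x ≤ 0 := claim z hzc hzid hztop
  have hz2 : ∀ x, -z x ≤ 0 := by
    apply claim (fun x => -z x) hzc.neg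
    · intro a b
      have := hzid a b
      have hneg : (∫ t in a..b, (q t / r t) * -z t) = -∫ t in a..b, (q t / r t) * z t := by
        rw [← intervalIntegral.integral_neg]
        congr 1; funext t; ring
      rw [hneg]
      linarith
    · have := hztop.neg
      simpa using this
  funext x
  have h1 := hz1 x
  have h2 := hz2 x
  have : z x = 0 := le_antisymm h1 (by linarith)
  simp only [hz] at this
  linarith



theorem exists_good_x0 (hr : Continuous r) (hrpos : ∀ x, 0 < r x)
    (hq : LocallyIntegrable q volume) (hqnn : ∀ x, 0 ≤ q x)
    (hS1 : S1E r q = ⊤) (hS2 : S2E r q = ⊤)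
    (hq0 : Tendsto q atBot (nhds 0) ∨ Tendsto q atTop (nhds 0))
    {ε : ℝ} (hε : 0 < ε) :
    ∃ x₀ : ℝ, ∀ t ∈ Icc (x₀ - dfun r q x₀) (x₀ + dfun r q x₀), q t ≤ ε := by
  have hw := w_loc hr hrpos hq
  have hQm := Qf_mono hrpos hqnn hw
  rcases hq0 with htend | htend
  · -- q → 0 at -∞
    obtain ⟨M, hM⟩ : ∃ M : ℝ, ∀ t ≤ M, q t ≤ ε := by
      have := htend.eventually (eventually_abs_sub_lt 0 hε)
      rw [eventually_atBot] at this
      obtain ⟨M, hM⟩ := this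
      exact ⟨M, fun t ht => by
        have := hM t ht
        rw [sub_zero] at this
        exact (le_abs_self _).trans this.le⟩
    obtain ⟨x₀, hx₀⟩ : ∃ x₀ : ℝ, Qf r q x₀ < Qf r q M - 2 := by
      have := Qf_tendsto_bot hrpos hqnn hw hS1
      rw [tendsto_atBot] at this
      obtain ⟨x₀, hx₀⟩ := (this (Qf r q M - 2 - 1)).exists
      exact ⟨x₀, by linarith⟩
    obtain ⟨hd₀pos, hQ2⟩ := dfun_spec hrpos hqnn hw hS2 x₀
    set d₀ := dfun r q x₀ with hd₀
    refine ⟨x₀, fun t ht => ?_⟩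
    have hbM : x₀ + d₀ ≤ M := by
      by_contra hcon
      push_neg at hcon
      have h1 : Qf r q M ≤ Qf r q (x₀ + d₀) := hQm hcon.le
      have h2 : Qf r q (x₀ - d₀) ≤ Qf r q x₀ := hQm (by linarith)
      linarith
    exact hM t (ht.2.trans hbM)
  · -- q → 0 at +∞
    obtain ⟨M, hM⟩ : ∃ M : ℝ, ∀ t, M ≤ t → q t ≤ ε := by
      have := htend.eventually (eventually_abs_sub_lt 0 hε)
      rw [eventually_atTop] at this
      obtain ⟨M, hM⟩ := this
      exact ⟨M, fun t ht => by
        have := hM t ht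
        rw [sub_zero] at this
        exact (le_abs_self _).trans this.le⟩
    obtain ⟨x₀, hx₀⟩ : ∃ x₀ : ℝ, Qf r q M + 2 < Qf r q x₀ := by
      have := Qf_tendsto_top hrpos hqnn hw hS2
      rw [tendsto_atTop] at this
      obtain ⟨x₀, hx₀⟩ := (this (Qf r q M + 2 + 1)).exists
      exact ⟨x₀, by linarith⟩
    obtain ⟨hd₀pos, hQ2⟩ := dfun_spec hrpos hqnn hw hS2 x₀
    set d₀ := dfun r q x₀ with hd₀
    refine ⟨x₀, fun t ht => ?_⟩
    have haM : M ≤ x₀ - d₀ := by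
      by_contra hcon
      push_neg at hcon
      have h1 : Qf r q (x₀ - d₀) ≤ Qf r q M := hQm hcon.le
      have h2 : Qf r q x₀ ≤ Qf r q (x₀ + d₀) := hQm (by linarith)
      linarith
    exact hM t (haM.trans ht.1)

end Stmt18Aux

theorem stmt18 (r q : ℝ → ℝ) (hr : Continuous r) (hrpos : ∀ x, 0 < r x)
    (hq : LocallyIntegrable q volume) (hqnn : ∀ x, 0 ≤ q x)
    (hS1 : S1E r q = ⊤) (hS2 : S2E r q = ⊤)
    (δ : ℝ) (hδ : 0 < δ)
    (hd : ∀ x t : ℝ, |t - x| ≤ dfun r q x → δ * dfun r q x ≤ dfun r q t)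
    (hq0 : Tendsto q atBot (nhds 0) ∨ Tendsto q atTop (nhds 0)) :
    ∀ p : ℝ≥0∞, 1 ≤ p →
      (p ≠ ⊤ → ¬ CorrectlySolvableLp r q p) ∧
      (p = ⊤ → ¬ CorrectlySolvableC r q) := by
  classical
  open Stmt18Aux in
  have hw : LocallyIntegrable (Stmt18Aux.wf r q) volume := Stmt18Aux.w_loc hr hrpos hq
  have hQm := Stmt18Aux.Qf_mono hrpos hqnn hw
  have hδ1 : δ ≤ 1 := by
    obtain ⟨hdpos, -⟩ := Stmt18Aux.dfun_spec hrpos hqnn hw hS2 0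
    have h := hd 0 0 (by simpa using hdpos.le)
    nlinarith
  intro p hp
  constructor
  · -- Lᵖ case
    intro hptop hcon
    obtain ⟨c, hcpos, hctop, hcall⟩ := hcon
    have hp0 : p ≠ 0 := (zero_lt_one.trans_le hp).ne'
    have hpt1 : 1 ≤ p.toReal := by
      have := ENNReal.toReal_mono hptop hp
      simpa using this
    set γ : ℝ := 1 / p.toReal with hγ
    have hγpos : 0 < γ := by rw [hγ]; positivity
    have hγ1 : γ ≤ 1 := by
      rw [hγ, div_le_one (by linarith : (0:ℝ) < p.toReal)]; linarith
    set c' := c.toReal with hc'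
    have hc'0 : 0 ≤ c' := ENNReal.toReal_nonneg
    set ε : ℝ := min 1 (Real.exp (-4 : ℝ) * δ / (c' + 1)) with hε
    have hεpos : 0 < ε := lt_min one_pos (by positivity)
    obtain ⟨x₀, hx₀⟩ := Stmt18Aux.exists_good_x0 hr hrpos hq hqnn hS1 hS2 hq0 hεpos
    obtain ⟨hd₀pos, hQ2⟩ := Stmt18Aux.dfun_spec hrpos hqnn hw hS2 x₀
    set d₀ := dfun r q x₀ with hd₀
    set a := x₀ - d₀ with ha
    set b := x₀ + d₀ with hb
    have hab : a ≤ b := by rw [ha, hb]; linarith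
    obtain ⟨hdapos, hQa2⟩ := Stmt18Aux.dfun_spec hrpos hqnn hw hS2 a
    set da := dfun r q a with hda
    set l := a - da with hl
    have hQal : Stmt18Aux.Qf r q a - Stmt18Aux.Qf r q l ≤ 2 := by
      have h1 : Stmt18Aux.Qf r q a ≤ Stmt18Aux.Qf r q (a + da) := hQm (by linarith)
      rw [hl]; linarith
    have hdage : δ * d₀ ≤ da := by
      have h := hd x₀ a (by rw [ha]; simp [abs_of_nonpos, hd₀pos.le]; exact hd₀.le)
      exact h
    set f : ℝ → ℝ := (Set.Ioc a b).indicator (fun _ => (1:ℝ)) with hf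
    have hfnn : ∀ t, 0 ≤ f t := by
      intro t; rw [hf]; exact Set.indicator_nonneg (fun _ _ => zero_le_one) t
    have hfb1 : ∀ t, |f t| ≤ 1 := by
      intro t; rw [hf]
      by_cases hm : t ∈ Set.Ioc a b
      · rw [Set.indicator_of_mem hm]; simp
      · rw [Set.indicator_of_notMem hm]; simp
    have hfs : ∀ t, t ≤ a → f t = 0 := by
      intro t ht; rw [hf]
      exact Set.indicator_of_notMem (fun hm => absurd hm.1 (not_lt.mpr ht)) _
    have hfT : ∀ t, b < t → f t = 0 := by
      intro t ht; rw [hf]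
      exact Set.indicator_of_notMem (fun hm => absurd hm.2 (not_le.mpr ht)) _
    have hf1 : ∀ t ∈ Set.Ioc a b, 1 ≤ f t := by
      intro t ht; rw [hf, Set.indicator_of_mem ht]
    have hfint : Integrable f volume := by
      rw [hf, integrable_indicator_iff measurableSet_Ioc]
      exact integrableOn_const measure_Ioc_lt_top.ne
    have hfli : LocallyIntegrable f volume := hfint.locallyIntegrable
    have hmem : MemLp f p volume :=
      memLp_indicator_const p measurableSet_Ioc 1 (Or.inr measure_Ioc_lt_top.ne)
    set y := Stmt18Aux.Ysol r q f b with hy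
    have hsol : IsSolution r q f y :=
      Stmt18Aux.Ysol_isSolution hr hrpos hq hqnn hfli hS1 (s := a) hfs hfT
    set β : ℝ := Real.exp (-4 : ℝ) * (2 / ε) with hβ
    have hβpos : 0 < β := by rw [hβ]; positivity
    have hlow : ∀ x ∈ Set.Icc l a, β ≤ y x := by
      intro x hx
      have hQ4 : Stmt18Aux.Qf r q b - Stmt18Aux.Qf r q x ≤ 4 := by
        have h1 : Stmt18Aux.Qf r q l ≤ Stmt18Aux.Qf r q x := hQm hx.1
        linarith [hQ2]
      have hlower := Stmt18Aux.Ysol_lower hr hrpos hq hqnn hfli hfnn hf1 hab le_rfl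
        hx.2 hQ4 hεpos (fun t ht => hx₀ t ⟨(by linarith [ht.1] : x₀ - d₀ ≤ t), ht.2⟩)
      rw [hQ2] at hlower
      rw [hβ]
      exact hlower
    obtain ⟨hexu, hbnd⟩ := hcall f hmem
    by_cases hyLp : MemLp y p volume
    · have hle := hbnd y hsol hyLp
      have hynn : ∀ x, 0 ≤ y x := Stmt18Aux.Ysol_nonneg hrpos hfnn hfT
      -- lower bound on eLpNorm y
      have hmono : eLpNorm ((Set.Icc l a).indicator (fun _ => β)) p volume ≤
          eLpNorm y p volume := by
        apply eLpNorm_mono_real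
        intro x
        by_cases hxm : x ∈ Set.Icc l a
        · rw [Set.indicator_of_mem hxm, Real.norm_eq_abs, abs_of_pos hβpos]
          exact hlow x hxm
        · rw [Set.indicator_of_notMem hxm]
          simpa using hynn x
      rw [eLpNorm_indicator_const measurableSet_Icc hp0 hptop] at hmono
      have hfnorm : eLpNorm f p volume = volume (Set.Ioc a b) ^ γ := by
        rw [hf, eLpNorm_indicator_const measurableSet_Ioc hp0 hptop]
        simp [hγ]
      have hvI : volume (Set.Icc l a) = ENNReal.ofReal da := by
        rw [Real.volume_Icc, hl]; congr 1; ring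
      have hvf : volume (Set.Ioc a b) = ENNReal.ofReal (2 * d₀) := by
        rw [Real.volume_Ioc, ha, hb]; congr 1; ring
      set V : ℝ≥0∞ := ENNReal.ofReal (2 * d₀) ^ γ with hV
      have hV0 : V ≠ 0 := by
        rw [hV]
        exact (ENNReal.rpow_pos (ENNReal.ofReal_pos.mpr (by linarith)) ENNReal.ofReal_ne_top).ne'
      have hVtop : V ≠ ⊤ := by
        rw [hV]
        exact ENNReal.rpow_ne_top_of_nonneg hγpos.le ENNReal.ofReal_ne_top
      -- (ofReal da)^γ ≥ ofReal (δ/2) * V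
      have hchain : ENNReal.ofReal (δ/2) * V ≤ ENNReal.ofReal da ^ γ := by
        have h1 : ENNReal.ofReal (δ/2) * ENNReal.ofReal (2*d₀) ≤ ENNReal.ofReal da := by
          rw [← ENNReal.ofReal_mul (by linarith : (0:ℝ) ≤ δ/2)]
          apply ENNReal.ofReal_le_ofReal
          nlinarith
        calc ENNReal.ofReal (δ/2) * V
            ≤ ENNReal.ofReal (δ/2) ^ γ * ENNReal.ofReal (2*d₀) ^ γ := by
              rw [hV]
              apply mul_le_mul_left
              have h2 : ENNReal.ofReal (δ/2) ≤ 1 := by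
                rw [← ENNReal.ofReal_one]
                exact ENNReal.ofReal_le_ofReal (by linarith)
              have h3 := ENNReal.rpow_le_rpow_of_exponent_ge h2 hγ1
              rwa [ENNReal.rpow_one] at h3
          _ = (ENNReal.ofReal (δ/2) * ENNReal.ofReal (2*d₀)) ^ γ :=
              (ENNReal.mul_rpow_of_nonneg _ _ hγpos.le).symm
          _ ≤ ENNReal.ofReal da ^ γ := ENNReal.rpow_le_rpow h1 hγpos.le
      have hlow2 : ENNReal.ofReal β * (ENNReal.ofReal (δ/2) * V) ≤ eLpNorm y p volume := by
        calc ENNReal.ofReal β * (ENNReal.ofReal (δ/2) * V)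
            ≤ ENNReal.ofReal β * ENNReal.ofReal da ^ γ := mul_le_mul_right hchain _
          _ = (‖β‖₊ : ℝ≥0∞) * volume (Set.Icc l a) ^ γ := by
              rw [hvI, ← Real.enorm_eq_ofReal hβpos.le]; rfl
          _ ≤ eLpNorm y p volume := by
              rw [hγ] at *
              exact hmono
      -- c < ofReal β * ofReal (δ/2)
      have hclt : c < ENNReal.ofReal β * ENNReal.ofReal (δ/2) := by
        rw [← ENNReal.ofReal_mul hβpos.le]
        rw [ENNReal.lt_ofReal_iff_toReal_lt hctop.ne]
        have hεle : ε ≤ Real.exp (-4 : ℝ) * δ / (c' + 1) := min_le_right _ _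
        have h1 : ε * (c' + 1) ≤ Real.exp (-4 : ℝ) * δ := by
          rw [← le_div_iff₀ (by linarith : (0:ℝ) < c' + 1)]
          exact hεle
        have h2 : β * (δ/2) = Real.exp (-4 : ℝ) * δ / ε := by
          rw [hβ]; field_simp
        rw [h2]
        rw [lt_div_iff₀ hεpos]
        nlinarith
      -- contradiction
      have hfin : eLpNorm y p volume < eLpNorm y p volume := by
        calc eLpNorm y p volume ≤ c * eLpNorm f p volume := hle
          _ = c * V := by rw [hfnorm, hvf, hV]
          _ < (ENNReal.ofReal β * ENNReal.ofReal (δ/2)) * V := by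
              rw [ENNReal.mul_lt_mul_iff_left hV0 hVtop]
              exact hclt
          _ = ENNReal.ofReal β * (ENNReal.ofReal (δ/2) * V) := by ring
          _ ≤ eLpNorm y p volume := hlow2
      exact absurd hfin (lt_irrefl _)
    · -- y is not in Lᵖ, contradicting unique existence
      obtain ⟨ysol, ⟨hysol, hymem⟩, -⟩ := hexu
      have hfri : ∀ a' b' : ℝ, IntervalIntegrable (fun t => f t / r t) volume a' b' := by
        have hli : LocallyIntegrable (fun t => f t * (r t)⁻¹) volume :=
          Stmt18Aux.LocIntMulCont hfli (hr.inv₀ (fun t => (hrpos t).ne'))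
        intro a' b'
        have := Stmt18Aux.locInt_ii hli a' b'
        simpa [div_eq_mul_inv] using this
      have heq : ysol = y := Stmt18Aux.sol_unique hr hrpos hq hqnn hS2 hfri hysol hsol
      exact hyLp (heq ▸ hymem)
  · -- C case
    intro _ hcon
    obtain ⟨c, hcpos, hcall⟩ := hcon
    set ε : ℝ := Real.exp (-4 : ℝ) / (c + 1) with hε
    have hεpos : 0 < ε := by rw [hε]; positivity
    obtain ⟨x₀, hx₀⟩ := Stmt18Aux.exists_good_x0 hr hrpos hq hqnn hS1 hS2 hq0 hεpos
    obtain ⟨hd₀pos, hQ2⟩ := Stmt18Aux.dfun_spec hrpos hqnn hw hS2 x₀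
    set d₀ := dfun r q x₀ with hd₀
    set a := x₀ - d₀ with ha
    set b := x₀ + d₀ with hb
    have hab : a ≤ b := by rw [ha, hb]; linarith
    set f : ℝ → ℝ := fun t => max 0 (min 1 (min (t - (a-1)) ((b+1) - t))) with hf
    have hfc : Continuous f := by
      apply continuous_const.max
      apply continuous_const.min
      exact (continuous_id.sub continuous_const).min (continuous_const.sub continuous_id)
    have hfnn : ∀ t, 0 ≤ f t := fun t => le_max_left 0 _
    have hfb1 : ∀ t, |f t| ≤ 1 := by
      intro t
      rw [abs_of_nonneg (hfnn t)]
      exact max_le zero_le_one (min_le_left _ _)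
    have hfs : ∀ t, t ≤ a - 1 → f t = 0 := by
      intro t ht
      apply max_eq_left
      have h1 : t - (a-1) ≤ 0 := by linarith
      exact le_trans (min_le_right _ _) (le_trans (min_le_left _ _) h1)
    have hfT : ∀ t, b + 1 < t → f t = 0 := by
      intro t ht
      apply max_eq_left
      have h1 : (b+1) - t ≤ 0 := by linarith
      exact le_trans (min_le_right _ _) (le_trans (min_le_right _ _) h1)
    have hf1 : ∀ t ∈ Set.Ioc a b, 1 ≤ f t := by
      intro t ht
      have h1 : (1:ℝ) ≤ t - (a - 1) := by linarith [ht.1]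
      have h2 : (1:ℝ) ≤ (b+1) - t := by linarith [ht.2]
      have h3 : min 1 (min (t-(a-1)) ((b+1)-t)) = 1 := min_eq_left (le_min h1 h2)
      rw [hf]
      simp only [h3]
      simp
    obtain ⟨-, hbnd⟩ := hcall f hfc ⟨1, hfb1⟩
    set y := Stmt18Aux.Ysol r q f (b+1) with hy
    have hsol : IsSolution r q f y :=
      Stmt18Aux.Ysol_isSolution hr hrpos hq hqnn (hfc.locallyIntegrable) hS1
        (s := a - 1) hfs hfT
    have hlower := Stmt18Aux.Ysol_lower hr hrpos hq hqnn (hfc.locallyIntegrable) hfnn hf1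
      hab (by linarith : b ≤ b + 1) (le_refl a)
      (by linarith [hQ2] : Stmt18Aux.Qf r q b - Stmt18Aux.Qf r q a ≤ 4) hεpos
      (fun t ht => hx₀ t ⟨(by linarith [ht.1] : x₀ - d₀ ≤ t), ht.2⟩)
    have hval : Real.exp (-4 : ℝ) * ((Stmt18Aux.Qf r q b - Stmt18Aux.Qf r q a)/ε) =
        2 * (c + 1) := by
      rw [hQ2, hε]
      have : Real.exp (-4:ℝ) ≠ 0 := (Real.exp_pos _).ne'
      field_simp
    have hyA : 2 * (c + 1) ≤ y a := by rw [← hval]; exact hlower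
    have habs := hbnd y hsol a
    have hsup : (⨆ t, |f t|) ≤ 1 := ciSup_le hfb1
    have hc1 : c * (⨆ t, |f t|) ≤ c * 1 := mul_le_mul_of_nonneg_left hsup hcpos.le
    have hya : |y a| = y a :=
      abs_of_nonneg (Stmt18Aux.Ysol_nonneg hrpos hfnn hfT a)
    rw [hya] at habs
    linarith
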